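/- arXiv:2312.04925 — 11 statements merged into one kernel-verified Lean document; each statement's English description precedes it below -/
import Mathlib

section
/- Inertia bound (Cvetković): Let G be a finite simple graph on n vertices and let A be a weighted adjacency matrix of G. Then α(G) ≤ n_{≥0}(A), the number of non-negative eigenvalues of A counted with multiplicity. -/
open Matrix Finset

/-- **Inertia bound (Cvetković).** If `A` is a symmetric weighted adjacency matrix of an
`n`-vertex graph `G`, then the independence number of `G` is at most the number of
non-negative eigenvalues of `A`, counted with multiplicity. -/
theorem inertia_bound (n : ℕ) (G : SimpleGraph (Fin n)) (A : Matrix (Fin n) (Fin n) ℝ)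
    (hA : A.IsHermitian) (hsupp : ∀ i j, ¬ G.Adj i j → A i j = 0)
    (s : Finset (Fin n)) (hs : ∀ i ∈ s, ∀ j ∈ s, ¬ G.Adj i j) :
    s.card ≤ Fintype.card {i : Fin n // 0 ≤ hA.eigenvalues i} := by
  classical
  set B := hA.eigenvectorBasis with hB
  -- the extension-by-zero linear map
  let E : (↥s → ℝ) →ₗ[ℝ] EuclideanSpace ℝ (Fin n) :=
    { toFun := fun c => WithLp.toLp 2 (fun i => if h : i ∈ s then c ⟨i, h⟩ else 0)
      map_add' := by
        intro a b; ext i; by_cases h : i ∈ s <;> simp [h]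
      map_smul' := by
        intro r a; ext i; by_cases h : i ∈ s <;> simp [h] }
  -- the map to coordinates on nonnegative eigenvectors
  let φ : (↥s → ℝ) →ₗ[ℝ] ({i : Fin n // 0 ≤ hA.eigenvalues i} → ℝ) :=
    { toFun := fun c => fun j => B.repr (E c) j.val
      map_add' := by intro a b; funext j; simp
      map_smul' := by intro r a; funext j; simp }
  have key : ∀ c : ↥s → ℝ,
      (E c : Fin n → ℝ) ⬝ᵥ (A *ᵥ (E c : Fin n → ℝ)) =
        ∑ j, hA.eigenvalues j * (B.repr (E c) j) ^ 2 := by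
    intro c
    set x : EuclideanSpace ℝ (Fin n) := E c with hx
    have hexp : (x : Fin n → ℝ) = ∑ j, B.repr x j • (B j : Fin n → ℝ) :=
      by have := congrArg WithLp.ofLp (B.sum_repr x).symm; simpa using this
    have hAx : A *ᵥ (x : Fin n → ℝ) = ∑ j, (B.repr x j * hA.eigenvalues j) • (B j : Fin n → ℝ) := by
      rw [← Matrix.mulVecLin_apply]
      conv_lhs => rw [hexp]
      rw [map_sum]
      refine Finset.sum_congr rfl fun j _ => ?_
      rw [_root_.map_smul, Matrix.mulVecLin_apply]
      refine (congrArg (fun v => B.repr x j • v) (hA.mulVec_eigenvectorBasis j)).trans ?_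
      rw [smul_smul]
    have hdot : ∀ j, (x : Fin n → ℝ) ⬝ᵥ (B j : Fin n → ℝ) = B.repr x j := by
      intro j
      rw [B.repr_apply_apply, real_inner_comm]
      simp [PiLp.inner_apply, dotProduct]
      exact Finset.sum_congr rfl fun _ _ => mul_comm _ _
    rw [hAx]
    have swap : (x : Fin n → ℝ) ⬝ᵥ (∑ j, (B.repr x j * hA.eigenvalues j) • (B j : Fin n → ℝ))
        = ∑ j, (B.repr x j * hA.eigenvalues j) * ((x : Fin n → ℝ) ⬝ᵥ (B j : Fin n → ℝ)) := by
      simp only [dotProduct, Finset.sum_apply, Pi.smul_apply, smul_eq_mul, Finset.mul_sum]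
      rw [Finset.sum_comm]
      refine Finset.sum_congr rfl fun j _ => Finset.sum_congr rfl fun i _ => ?_
      show (x : Fin n → ℝ) i * ((B.repr x j * hA.eigenvalues j) * (B j : Fin n → ℝ) i) = _
      ring
    rw [swap]
    refine Finset.sum_congr rfl fun j _ => ?_
    rw [hdot j]
    ring
  have qzero : ∀ c : ↥s → ℝ,
      (E c : Fin n → ℝ) ⬝ᵥ (A *ᵥ (E c : Fin n → ℝ)) = 0 := by
    intro c
    rw [dotProduct]
    refine Finset.sum_eq_zero fun i _ => ?_
    by_cases hi : i ∈ s
    · have : (A *ᵥ (E c : Fin n → ℝ)) i = 0 := by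
        rw [Matrix.mulVec, dotProduct]
        refine Finset.sum_eq_zero fun j _ => ?_
        by_cases hj : j ∈ s
        · rw [hsupp i j (hs i hi j hj), zero_mul]
        · show A i j * (if h : j ∈ s then c ⟨j, h⟩ else 0) = 0
          rw [dif_neg hj, mul_zero]
      rw [this, mul_zero]
    · show (if h : i ∈ s then c ⟨i, h⟩ else 0) * _ = 0
      rw [dif_neg hi, zero_mul]
  have hinj : Function.Injective φ := by
    rw [injective_iff_map_eq_zero]
    intro c hc
    have hc' : ∀ j : Fin n, 0 ≤ hA.eigenvalues j → B.repr (E c) j = 0 := by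
      intro j hj
      exact congrFun hc ⟨j, hj⟩
    have hsum : ∑ j, hA.eigenvalues j * (B.repr (E c) j) ^ 2 = 0 := by
      rw [← key c, qzero c]
    have hterm : ∀ j ∈ Finset.univ, hA.eigenvalues j * (B.repr (E c) j) ^ 2 ≤ 0 := by
      intro j _
      rcases le_or_gt 0 (hA.eigenvalues j) with h | h
      · rw [hc' j h]; simp
      · exact mul_nonpos_of_nonpos_of_nonneg h.le (sq_nonneg _)
    have hall : ∀ j : Fin n, B.repr (E c) j = 0 := by
      intro j
      rcases le_or_gt 0 (hA.eigenvalues j) with h | h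
      · exact hc' j h
      · have := (Finset.sum_eq_zero_iff_of_nonpos hterm).mp hsum j (Finset.mem_univ j)
        have h2 : (B.repr (E c) j) ^ 2 = 0 := by
          by_contra hne
          exact absurd this (ne_of_lt (mul_neg_of_neg_of_pos h
            (lt_of_le_of_ne (sq_nonneg _) (Ne.symm hne))))
        exact pow_eq_zero_iff (by norm_num) |>.mp h2
    have hEx : E c = 0 := by
      have : B.repr (E c) = 0 := by
        ext j; exact hall j
      simpa using congrArg B.repr.symm this
    funext i
    have := congrFun (congrArg (fun v : EuclideanSpace ℝ (Fin n) => (v : Fin n → ℝ)) hEx) i.val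
    simpa [E, i.2] using this
  calc s.card = Fintype.card ↥s := (Fintype.card_coe s).symm
    _ = Module.finrank ℝ (↥s → ℝ) := (Module.finrank_fintype_fun_eq_card ℝ).symm
    _ ≤ Module.finrank ℝ ({i : Fin n // 0 ≤ hA.eigenvalues i} → ℝ) :=
        LinearMap.finrank_le_finrank_of_injective hinj
    _ = Fintype.card {i : Fin n // 0 ≤ hA.eigenvalues i} := Module.finrank_fintype_fun_eq_card ℝ
end

section
/- Hermitian inertia bound: Let G be a finite simple graph on n vertices and let A be a Hermitian weighted adjacency matrix of G. Then α(G) ≤ n_{≥0}(A), the number of non-negative eigenvalues of A counted with multiplicity. -/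
open Matrix Finset

open scoped InnerProductSpace ComplexConjugate in
/-- **Hermitian inertia bound.** If `A` is a Hermitian weighted adjacency matrix of an
`n`-vertex graph `G`, then the independence number of `G` is at most the number of
non-negative eigenvalues of `A`, counted with multiplicity. -/
theorem hermitian_inertia_bound (n : ℕ) (G : SimpleGraph (Fin n)) (A : Matrix (Fin n) (Fin n) ℂ)
    (hA : A.IsHermitian) (hsupp : ∀ i j, ¬ G.Adj i j → A i j = 0)
    (s : Finset (Fin n)) (hs : ∀ i ∈ s, ∀ j ∈ s, ¬ G.Adj i j) :
    s.card ≤ Fintype.card {i : Fin n // 0 ≤ hA.eigenvalues i} := by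
  by_contra hlt
  push_neg at hlt
  classical
  set b := hA.eigenvectorBasis with hb
  set lam := hA.eigenvalues with hlamdef
  set k := Fintype.card {i : Fin n // 0 ≤ lam i} with hk
  -- the coordinate subspace supported on `s`
  set W : Submodule ℂ (EuclideanSpace ℂ (Fin n)) :=
    Submodule.span ℂ (Set.range fun i : {i // i ∈ s} => EuclideanSpace.single (i : Fin n) (1 : ℂ))
    with hWdef
  -- the span of eigenvectors with negative eigenvalues
  set V : Submodule ℂ (EuclideanSpace ℂ (Fin n)) :=
    Submodule.span ℂ (Set.range fun i : {i // lam i < 0} => b (i : Fin n)) with hVdef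
  have hWrank : Module.finrank ℂ W = s.card := by
    have hfam : (fun i : {i // i ∈ s} => EuclideanSpace.single (i : Fin n) (1 : ℂ))
        = (⇑(EuclideanSpace.basisFun (Fin n) ℂ)) ∘ Subtype.val := by
      funext i; simp [EuclideanSpace.basisFun_apply]
    rw [hWdef, hfam, finrank_span_eq_card
      ((EuclideanSpace.basisFun (Fin n) ℂ).orthonormal.linearIndependent.comp _
        Subtype.val_injective)]
    exact Fintype.card_coe s
  have hVrank : Module.finrank ℂ V = Fintype.card {i : Fin n // lam i < 0} :=
    finrank_span_eq_card (b.orthonormal.linearIndependent.comp _ Subtype.val_injective)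
  have hcardneg : Fintype.card {i : Fin n // lam i < 0} = n - k := by
    have h1 : Fintype.card {i : Fin n // ¬ (0 ≤ lam i)} = Fintype.card (Fin n) - k := by
      rw [hk]; exact Fintype.card_subtype_compl _
    calc Fintype.card {i : Fin n // lam i < 0}
        = Fintype.card {i : Fin n // ¬ 0 ≤ lam i} :=
          Fintype.card_congr (Equiv.subtypeEquivRight (fun i => (not_le).symm))
      _ = n - k := by rw [h1, Fintype.card_fin]
  have hsn : s.card ≤ n := by simpa using s.card_le_univ
  -- intersection is nontrivial
  have hpos : 0 < Module.finrank ℂ ↥(W ⊓ V) := by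
    have hsum := Submodule.finrank_sup_add_finrank_inf_eq W V
    have hle : Module.finrank ℂ ↥(W ⊔ V) ≤ n := by
      have := Submodule.finrank_le (W ⊔ V)
      simpa [finrank_euclideanSpace] using this
    omega
  have : Nontrivial ↥(W ⊓ V) := Module.nontrivial_of_finrank_pos (R := ℂ) hpos
  obtain ⟨⟨x, hxWV⟩, hxne⟩ := exists_ne (0 : ↥(W ⊓ V))
  have hxW : x ∈ W := hxWV.1
  have hxV : x ∈ V := hxWV.2
  have hx0 : x ≠ 0 := by
    intro h; exact hxne (Subtype.ext h)
  -- vectors in W vanish off s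
  have key1 : ∀ j, j ∉ s → x j = 0 := by
    let W' : Submodule ℂ (EuclideanSpace ℂ (Fin n)) :=
      { carrier := {y | ∀ j, j ∉ s → y j = 0}
        add_mem' := fun ha hb j hj => by
          simp only [PiLp.add_apply, ha j hj, hb j hj, add_zero]
        zero_mem' := fun j hj => rfl
        smul_mem' := fun c a ha j hj => by
          simp only [PiLp.smul_apply, ha j hj, smul_zero] }
    have hle : W ≤ W' := by
      rw [hWdef, Submodule.span_le]
      rintro _ ⟨i, rfl⟩ j hj
      have : j ≠ (i : Fin n) := fun h => hj (h ▸ i.2)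
      simp [EuclideanSpace.single_apply, this]
    exact hle hxW
  -- vectors in V are orthogonal to nonnegative eigenvectors
  have key2 : ∀ j, 0 ≤ lam j → ⟪b j, x⟫_ℂ = 0 := by
    let V' : Submodule ℂ (EuclideanSpace ℂ (Fin n)) :=
      { carrier := {y | ∀ j, 0 ≤ lam j → ⟪b j, y⟫_ℂ = 0}
        add_mem' := fun ha hb j hj => by
          rw [inner_add_right, ha j hj, hb j hj, add_zero]
        zero_mem' := fun j hj => inner_zero_right _
        smul_mem' := fun c a ha j hj => by
          rw [inner_smul_right, ha j hj, mul_zero] }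
    have hle : V ≤ V' := by
      rw [hVdef, Submodule.span_le]
      rintro _ ⟨i, rfl⟩ j hj
      exact b.orthonormal.2 (fun h => absurd (h ▸ hj) (not_le.2 i.2))
    exact hle hxV
  set T := Matrix.toEuclideanLin A with hT
  -- the quadratic form vanishes on x since x is supported on the independent set s
  have hQ0 : ⟪x, T x⟫_ℂ = 0 := by
    rw [EuclideanSpace.inner_eq_star_dotProduct]
    have : (WithLp.equiv 2 (Fin n → ℂ)) (T x) = A *ᵥ (WithLp.equiv 2 (Fin n → ℂ)) x := rfl
    rw [show (T x).ofLp = A *ᵥ (WithLp.equiv 2 (Fin n → ℂ)) x from this, dotProduct_comm, dotProduct]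
    apply Finset.sum_eq_zero
    intro i _
    by_cases hi : i ∈ s
    · have : (A *ᵥ (WithLp.equiv 2 (Fin n → ℂ)) x) i = 0 := by
        rw [mulVec, dotProduct]
        apply Finset.sum_eq_zero
        intro j _
        by_cases hj : j ∈ s
        · rw [hsupp i j (hs i hi j hj), zero_mul]
        · have : ((WithLp.equiv 2 (Fin n → ℂ)) x) j = 0 := key1 j hj
          rw [this, mul_zero]
      rw [this, mul_zero]
    · have : ((WithLp.equiv 2 (Fin n → ℂ)) x) i = 0 := key1 i hi
      simp [key1 i hi]
  -- eigen-expansion of the quadratic form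
  have hTb : ∀ i, T (b i) = ((lam i : ℝ) : ℂ) • b i := by
    intro i
    have h1 := hA.mulVec_eigenvectorBasis i
    apply (WithLp.equiv 2 (Fin n → ℂ)).injective
    have h2 : (WithLp.equiv 2 (Fin n → ℂ)) (T (b i)) = A *ᵥ (WithLp.equiv 2 (Fin n → ℂ)) (b i) :=
      rfl
    rw [h2]
    funext j
    have := congrFun h1 j
    simpa [Pi.smul_apply, Complex.real_smul] using this
  set c : Fin n → ℂ := fun i => ⟪b i, x⟫_ℂ with hc
  have hsym := (Matrix.isHermitian_iff_isSymmetric.1 hA)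
  have hexp : ⟪x, T x⟫_ℂ = ∑ i, ((lam i * Complex.normSq (c i) : ℝ) : ℂ) := by
    rw [← b.sum_inner_mul_inner x (T x)]
    apply Finset.sum_congr rfl
    intro i _
    have h1 : ⟪b i, T x⟫_ℂ = ((lam i : ℝ) : ℂ) * c i := by
      rw [← hsym (b i) x, hTb i, inner_smul_left, Complex.conj_ofReal]
    have h2 : ⟪x, b i⟫_ℂ = conj (c i) := by
      rw [hc, inner_conj_symm]
    rw [h1, h2]
    push_cast
    rw [← Complex.mul_conj]
    ring
  -- x has a nonzero coordinate, necessarily at a negative eigenvalue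
  have hex : ∃ i, c i ≠ 0 := by
    by_contra h
    push_neg at h
    apply hx0
    have := b.sum_repr' x
    rw [← this]
    apply Finset.sum_eq_zero
    intro i _
    show c i • b i = 0
    rw [h i, zero_smul]
  obtain ⟨i0, hi0⟩ := hex
  have hneg : ∑ i, lam i * Complex.normSq (c i) < 0 := by
    have := Finset.sum_lt_sum (f := fun i => lam i * Complex.normSq (c i))
      (g := fun _ => (0 : ℝ)) (s := Finset.univ)
      (by
        intro i _
        show lam i * Complex.normSq (c i) ≤ 0
        by_cases h : 0 ≤ lam i
        · have hci : c i = 0 := key2 i h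
          rw [hci]; simp
        · exact mul_nonpos_of_nonpos_of_nonneg (le_of_lt (not_le.1 h)) (Complex.normSq_nonneg _))
      ⟨i0, Finset.mem_univ i0, by
        show lam i0 * Complex.normSq (c i0) < 0
        have hlneg : lam i0 < 0 := by
          by_contra h
          exact hi0 (by rw [hc]; exact key2 i0 (not_lt.1 h))
        exact mul_neg_of_neg_of_pos hlneg (Complex.normSq_pos.2 hi0)⟩
    simpa using this
  rw [hexp] at hQ0
  rw [← Complex.ofReal_sum] at hQ0
  exact absurd (Complex.ofReal_eq_zero.1 hQ0) (ne_of_lt hneg)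
end

section
/- Sinkovic's theorem: Let G be the Paley graph on 17 vertices. Then α(G) = 3, but n_{≥0}(A) ≥ 4 for every weighted adjacency matrix A of G. -/
open Matrix Finset

lemma paley17_aux : ∀ x y z : ZMod 17, z ≠ 0 → x - y = z ^ 2 →
    ∃ w : ZMod 17, w ≠ 0 ∧ y - x = w ^ 2 := by
  decide

/-- The Paley graph on 17 vertices: `x` is adjacent to `y` iff `x ≠ y` and `x - y` is a
nonzero square in `ZMod 17`. -/
def paley17 : SimpleGraph (ZMod 17) where
  Adj x y := x ≠ y ∧ ∃ z : ZMod 17, z ≠ 0 ∧ x - y = z ^ 2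
  symm := by
    constructor
    rintro x y ⟨hxy, z, hz, h⟩
    exact ⟨hxy.symm, paley17_aux x y z hz h⟩
  loopless := ⟨fun x h => h.1 rfl⟩

instance paley17.adjDecidable : DecidableRel paley17.Adj :=
  fun x y => decidable_of_iff (x ≠ y ∧ ∃ z : ZMod 17, z ≠ 0 ∧ x - y = z ^ 2) Iff.rfl

/-- Boolean adjacency test. -/
def adjb (x y : ZMod 17) : Bool := (x - y).val ∈ [1, 2, 4, 8, 9, 13, 15, 16]

lemma adjb_iff : ∀ x y : ZMod 17, paley17.Adj x y ↔ adjb x y = true := by decide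

def quadb (a b c d : ZMod 17) : Bool :=
  decide (a = b) || decide (a = c) || decide (a = d) || decide (b = c) || decide (b = d)
    || decide (c = d) || adjb a b || adjb a c || adjb a d || adjb b c || adjb b d || adjb c d

set_option maxHeartbeats 4000000 in
lemma no4 : ∀ a b c d : ZMod 17, quadb a b c d = true := by decide

lemma adj_of_four {a b c d : ZMod 17} (hab : a ≠ b) (hac : a ≠ c) (had : a ≠ d)
    (hbc : b ≠ c) (hbd : b ≠ d) (hcd : c ≠ d) :
    paley17.Adj a b ∨ paley17.Adj a c ∨ paley17.Adj a d ∨ paley17.Adj b c ∨ paley17.Adj b d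
      ∨ paley17.Adj c d := by
  have h := no4 a b c d
  simp only [quadb, Bool.or_eq_true, decide_eq_true_eq, ← adjb_iff] at h
  tauto

variable {A : Matrix (ZMod 17) (ZMod 17) ℝ} (hA : A.IsHermitian)

noncomputable def coords (hA : A.IsHermitian) (w : ZMod 17 → ℝ) : ZMod 17 → ℝ :=
  fun i => ⇑(hA.eigenvectorBasis i) ⬝ᵥ w

lemma coords_eq_vecMul (w : ZMod 17 → ℝ) :
    coords hA w = w ᵥ* (hA.eigenvectorUnitary : Matrix (ZMod 17) (ZMod 17) ℝ) := by
  funext i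
  simp [coords, vecMul, dotProduct, Matrix.IsHermitian.eigenvectorUnitary_apply, mul_comm]

lemma w_eq_mulVec_coords (w : ZMod 17 → ℝ) :
    (hA.eigenvectorUnitary : Matrix (ZMod 17) (ZMod 17) ℝ) *ᵥ (coords hA w) = w := by
  have hu : (hA.eigenvectorUnitary : Matrix (ZMod 17) (ZMod 17) ℝ) *
      star (hA.eigenvectorUnitary : Matrix (ZMod 17) (ZMod 17) ℝ) = 1 :=
    Matrix.mem_unitaryGroup_iff.mp hA.eigenvectorUnitary.2
  have : coords hA w = star (hA.eigenvectorUnitary : Matrix (ZMod 17) (ZMod 17) ℝ) *ᵥ w := by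
    funext i
    simp [coords, Matrix.mulVec, dotProduct, Matrix.IsHermitian.eigenvectorUnitary_apply,
      Matrix.star_apply, mul_comm]
  rw [this, Matrix.mulVec_mulVec, hu, Matrix.one_mulVec]

lemma quadform_eq (w : ZMod 17 → ℝ) :
    w ⬝ᵥ (A *ᵥ w) = ∑ i, hA.eigenvalues i * (coords hA w i)^2 := by
  conv_lhs => rw [hA.spectral_theorem, Unitary.conjStarAlgAut_apply]
  rw [← Matrix.mulVec_mulVec, ← Matrix.mulVec_mulVec, Matrix.dotProduct_mulVec]
  have h1 : w ᵥ* (hA.eigenvectorUnitary : Matrix (ZMod 17) (ZMod 17) ℝ) = coords hA w :=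
    (coords_eq_vecMul hA w).symm
  have h2 : star (hA.eigenvectorUnitary : Matrix (ZMod 17) (ZMod 17) ℝ) *ᵥ w = coords hA w := by
    funext i
    simp [coords, Matrix.mulVec, dotProduct, Matrix.IsHermitian.eigenvectorUnitary_apply,
      Matrix.star_apply, mul_comm]
  rw [h1, h2]
  simp [Matrix.mulVec_diagonal, dotProduct, Function.comp]
  ring_nf
  congr 1
  funext i
  ring

lemma negdef (w : ZMod 17 → ℝ)
    (h0 : ∀ i, 0 ≤ hA.eigenvalues i → coords hA w i = 0) (hw : w ≠ 0) :
    w ⬝ᵥ (A *ᵥ w) < 0 := by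
  rw [quadform_eq hA w]
  have hc : coords hA w ≠ 0 := by
    intro h
    apply hw
    rw [← w_eq_mulVec_coords hA w, h, Matrix.mulVec_zero]
  obtain ⟨i0, hi0⟩ : ∃ i, coords hA w i ≠ 0 := by
    by_contra h
    push_neg at h
    exact hc (funext h)
  have hneg : hA.eigenvalues i0 < 0 := by
    by_contra h
    push_neg at h
    exact hi0 (h0 i0 h)
  have : ∑ i, hA.eigenvalues i * (coords hA w i)^2 < ∑ i : ZMod 17, (0:ℝ) := by
    apply Finset.sum_lt_sum
    · intro i _
      rcases le_or_gt 0 (hA.eigenvalues i) with h | h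
      · rw [h0 i h]; simp
      · exact mul_nonpos_of_nonpos_of_nonneg h.le (sq_nonneg _)
    · exact ⟨i0, Finset.mem_univ _, mul_neg_of_neg_of_pos hneg (by positivity)⟩
  simpa using this

def sbv (i : ZMod 17) : ZMod 17 → ℝ := Pi.single i 1

noncomputable def fvec (hA : A.IsHermitian) (i1 i2 i3 : ZMod 17) (v : ZMod 17) : Fin 3 → ℝ :=
  ![hA.eigenvectorBasis i1 v, hA.eigenvectorBasis i2 v, hA.eigenvectorBasis i3 v]

noncomputable def Dd (hA : A.IsHermitian) (i1 i2 i3 : ZMod 17) (a b c : ZMod 17) : ℝ :=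
  Matrix.det (Matrix.of ![fvec hA i1 i2 i3 a, fvec hA i1 i2 i3 b, fvec hA i1 i2 i3 c])

lemma Dd_expand (i1 i2 i3 a b c : ZMod 17) :
    Dd hA i1 i2 i3 a b c =
      fvec hA i1 i2 i3 a 0 * (fvec hA i1 i2 i3 b 1 * fvec hA i1 i2 i3 c 2
        - fvec hA i1 i2 i3 b 2 * fvec hA i1 i2 i3 c 1)
      - fvec hA i1 i2 i3 a 1 * (fvec hA i1 i2 i3 b 0 * fvec hA i1 i2 i3 c 2
        - fvec hA i1 i2 i3 b 2 * fvec hA i1 i2 i3 c 0)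
      + fvec hA i1 i2 i3 a 2 * (fvec hA i1 i2 i3 b 0 * fvec hA i1 i2 i3 c 1
        - fvec hA i1 i2 i3 b 1 * fvec hA i1 i2 i3 c 0) := by
  simp [Dd, Matrix.det_fin_three]
  ring

lemma qexpand4 (a b c d : ZMod 17) (t0 t1 t2 t3 : ℝ) :
    (t0 • sbv a + t1 • sbv b + t2 • sbv c + t3 • sbv d) ⬝ᵥ
      (A *ᵥ (t0 • sbv a + t1 • sbv b + t2 • sbv c + t3 • sbv d)) =
    t0*t0 * A a a + t0*t1 * A a b + t0*t2 * A a c + t0*t3 * A a d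
    + t1*t0 * A b a + t1*t1 * A b b + t1*t2 * A b c + t1*t3 * A b d
    + t2*t0 * A c a + t2*t1 * A c b + t2*t2 * A c c + t2*t3 * A c d
    + t3*t0 * A d a + t3*t1 * A d b + t3*t2 * A d c + t3*t3 * A d d := by
  simp [sbv, Matrix.mulVec_add, Matrix.mulVec_smul, Matrix.mulVec_single,
    dotProduct_add, dotProduct_smul, add_dotProduct,
    smul_dotProduct, single_dotProduct, smul_eq_mul]
  ring

lemma coords4 (a b c d : ZMod 17) (t0 t1 t2 t3 : ℝ) (i : ZMod 17) :
    coords hA (t0 • sbv a + t1 • sbv b + t2 • sbv c + t3 • sbv d) i =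
      t0 * hA.eigenvectorBasis i a + t1 * hA.eigenvectorBasis i b
      + t2 * hA.eigenvectorBasis i c + t3 * hA.eigenvectorBasis i d := by
  simp [coords, sbv, dotProduct_add, dotProduct_smul,
    dotProduct_single, smul_eq_mul]

lemma combo_apply (a b c d : ZMod 17) (t0 t1 t2 t3 : ℝ) (x : ZMod 17) :
    (t0 • sbv a + t1 • sbv b + t2 • sbv c + t3 • sbv d) x =
      t0 * (if x = a then 1 else 0) + t1 * (if x = b then 1 else 0)
      + t2 * (if x = c then 1 else 0) + t3 * (if x = d then 1 else 0) := by
  simp [sbv, Pi.single_apply, smul_eq_mul]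

lemma detne (i1 i2 i3 : ZMod 17)
    (hP : ∀ i, 0 ≤ hA.eigenvalues i → i = i1 ∨ i = i2 ∨ i = i3)
    (a b c : ZMod 17) (hab : a ≠ b) (hac : a ≠ c) (hbc : b ≠ c)
    (zaa : A a a = 0) (zbb : A b b = 0) (zcc : A c c = 0)
    (zab : A a b = 0) (zac : A a c = 0) (zbc : A b c = 0)
    (zba : A b a = 0) (zca : A c a = 0) (zcb : A c b = 0) :
    Dd hA i1 i2 i3 a b c ≠ 0 := by
  intro hdet
  obtain ⟨v, hv0, hvM⟩ :=
    (Matrix.exists_vecMul_eq_zero_iff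
      (M := Matrix.of ![fvec hA i1 i2 i3 a, fvec hA i1 i2 i3 b, fvec hA i1 i2 i3 c])).mpr hdet
  have hcoord : ∀ k : Fin 3,
      v 0 * fvec hA i1 i2 i3 a k + v 1 * fvec hA i1 i2 i3 b k + v 2 * fvec hA i1 i2 i3 c k = 0 := by
    intro k
    have := congrFun hvM k
    simpa [Matrix.vecMul, dotProduct, Fin.sum_univ_three] using this
  set w : ZMod 17 → ℝ := v 0 • sbv a + v 1 • sbv b + v 2 • sbv c + (0:ℝ) • sbv a with hw
  have h0 : ∀ i, 0 ≤ hA.eigenvalues i → coords hA w i = 0 := by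
    intro i hi
    rw [hw, coords4]
    rcases hP i hi with h | h | h
    · subst h
      have h' := hcoord 0
      simp only [fvec, Matrix.cons_val_zero] at h'
      linear_combination h'
    · subst h
      have h' := hcoord 1
      simp only [fvec, Matrix.cons_val_one, Matrix.head_cons, Matrix.cons_val_zero] at h'
      linear_combination h'
    · subst h
      have h' := hcoord 2
      simp [fvec] at h'
      linear_combination h'
  have h012 : v 0 ≠ 0 ∨ v 1 ≠ 0 ∨ v 2 ≠ 0 := by
    by_contra h
    push_neg at h
    apply hv0
    funext j
    fin_cases j
    · exact h.1
    · exact h.2.1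
    · exact h.2.2
  have hwne : w ≠ 0 := by
    intro hweq
    rcases h012 with h | h | h
    · have := congrFun hweq a
      rw [hw, combo_apply] at this
      simp [hab, hac, Ne.symm] at this
      exact h this
    · have := congrFun hweq b
      rw [hw, combo_apply] at this
      simp [hab.symm, hbc, Ne.symm] at this
      exact h this
    · have := congrFun hweq c
      rw [hw, combo_apply] at this
      simp [hac.symm, hbc.symm, Ne.symm] at this
      exact h this
  have hneg := negdef hA w h0 hwne
  have hzero : w ⬝ᵥ (A *ᵥ w) = 0 := by
    rw [hw, qexpand4]
    rw [zaa, zbb, zcc, zab, zac, zbc, zba, zca, zcb]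
    ring
  rw [hzero] at hneg
  exact lt_irrefl 0 hneg

/-- The key sign relation: if `{a,b,c}` and `{a,b,c'}` are independent triples then
`A c c' * D(a,b,c) * D(a,b,c') > 0`. -/
lemma key_rel (i1 i2 i3 : ZMod 17)
    (hP : ∀ i, 0 ≤ hA.eigenvalues i → i = i1 ∨ i = i2 ∨ i = i3)
    (a b c c' : ZMod 17)
    (hab : a ≠ b) (hac : a ≠ c) (hbc : b ≠ c) (hac' : a ≠ c') (hbc' : b ≠ c') (hcc' : c ≠ c')
    (zaa : A a a = 0) (zbb : A b b = 0) (zcc : A c c = 0) (zc'c' : A c' c' = 0)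
    (zab : A a b = 0) (zac : A a c = 0) (zbc : A b c = 0) (zac' : A a c' = 0) (zbc' : A b c' = 0)
    (zba : A b a = 0) (zca : A c a = 0) (zcb : A c b = 0) (zc'a : A c' a = 0)
    (zc'b : A c' b = 0) :
    0 < A c c' * Dd hA i1 i2 i3 a b c * Dd hA i1 i2 i3 a b c' := by
  have hd' : Dd hA i1 i2 i3 a b c' ≠ 0 :=
    detne hA i1 i2 i3 hP a b c' hab hac' hbc' zaa zbb zc'c' zab zac' zbc' zba zc'a zc'b
  set w : ZMod 17 → ℝ := Dd hA i1 i2 i3 a b c' • sbv c + (-(Dd hA i1 i2 i3 c b c')) • sbv a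
      + (-(Dd hA i1 i2 i3 a c c')) • sbv b + (-(Dd hA i1 i2 i3 a b c)) • sbv c' with hw
  have h0 : ∀ i, 0 ≤ hA.eigenvalues i → coords hA w i = 0 := by
    intro i hi
    rw [hw, coords4]
    rcases hP i hi with h | h | h
    · subst h
      rw [Dd_expand, Dd_expand, Dd_expand, Dd_expand]
      simp only [fvec, Matrix.cons_val_zero, Matrix.cons_val_one, Matrix.head_cons,
        Matrix.cons_val_two, Matrix.tail_cons]
      ring
    · subst h
      rw [Dd_expand, Dd_expand, Dd_expand, Dd_expand]
      simp only [fvec, Matrix.cons_val_zero, Matrix.cons_val_one, Matrix.head_cons,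
        Matrix.cons_val_two, Matrix.tail_cons]
      ring
    · subst h
      rw [Dd_expand, Dd_expand, Dd_expand, Dd_expand]
      simp only [fvec, Matrix.cons_val_zero, Matrix.cons_val_one, Matrix.head_cons,
        Matrix.cons_val_two, Matrix.tail_cons]
      ring
  have hwne : w ≠ 0 := by
    intro hweq
    have := congrFun hweq c
    rw [hw, combo_apply] at this
    simp [hac.symm, hbc.symm, hcc', Ne.symm] at this
    exact hd' this
  have hneg := negdef hA w h0 hwne
  have hzero : w ⬝ᵥ (A *ᵥ w) =
      -2 * A c c' * Dd hA i1 i2 i3 a b c * Dd hA i1 i2 i3 a b c' := by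
    rw [hw, qexpand4]
    have hsymm : A c' c = A c c' := by
      have := hA.apply c c'
      simpa using this
    rw [zaa, zbb, zcc, zc'c', zab, zac, zbc, zac', zbc', zba, zca, zcb, zc'a, zc'b, hsymm]
    ring
  rw [hzero] at hneg
  nlinarith [hneg]

lemma exists_P3
    (zaa : A 0 0 = 0) (zbb : A 3 3 = 0) (zcc : A 6 6 = 0)
    (zab : A 0 3 = 0) (zac : A 0 6 = 0) (zbc : A 3 6 = 0)
    (zba : A 3 0 = 0) (zca : A 6 0 = 0) (zcb : A 6 3 = 0)
    (hcard : Fintype.card {i : ZMod 17 // 0 ≤ hA.eigenvalues i} ≤ 3) :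
    ∃ i1 i2 i3 : ZMod 17, i1 ≠ i2 ∧ i1 ≠ i3 ∧ i2 ≠ i3 ∧
      (∀ i, 0 ≤ hA.eigenvalues i → i = i1 ∨ i = i2 ∨ i = i3) := by
  classical
  set P : Finset (ZMod 17) := Finset.univ.filter (fun i => 0 ≤ hA.eigenvalues i) with hP
  have hcardP : P.card = Fintype.card {i : ZMod 17 // 0 ≤ hA.eigenvalues i} := by
    rw [hP]
    exact (Fintype.card_subtype _).symm
  have h3le : 3 ≤ P.card := by
    by_contra hlt
    push_neg at hlt
    have hle2 : P.card ≤ 2 := by omega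
    -- three vectors in a ≤ 2 dimensional space are dependent
    set y : Fin 3 → ({x // x ∈ P} → ℝ) :=
      fun j => fun p => hA.eigenvectorBasis p.1 (![0, 3, 6] j) with hy
    have hnli : ¬ LinearIndependent ℝ y := by
      intro hli
      have := hli.fintype_card_le_finrank
      rw [Module.finrank_fintype_fun_eq_card] at this
      simp [Fintype.card_coe, Fintype.card_fin] at this
      omega
    obtain ⟨g, hgsum, j0, hj0⟩ := Fintype.not_linearIndependent_iff.mp hnli
    set w : ZMod 17 → ℝ := g 0 • sbv 0 + g 1 • sbv 3 + g 2 • sbv 6 + (0:ℝ) • sbv 0 with hw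
    have h0 : ∀ i, 0 ≤ hA.eigenvalues i → coords hA w i = 0 := by
      intro i hi
      have hiP : i ∈ P := by
        rw [hP]; exact Finset.mem_filter.mpr ⟨Finset.mem_univ _, hi⟩
      have := congrFun hgsum ⟨i, hiP⟩
      rw [hw, coords4]
      simp [Fin.sum_univ_three, hy, Matrix.vecHead, Matrix.vecTail] at this ⊢
      linear_combination this
    have hwne : w ≠ 0 := by
      intro hweq
      fin_cases j0 <;> simp only [] at hj0
      · have := congrFun hweq 0
        rw [hw, combo_apply] at this
        simp [show ((0:ZMod 17) = 3) ↔ False by decide, show ((0:ZMod 17) = 6) ↔ False by decide] at this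
        exact hj0 (by simpa using this)
      · have := congrFun hweq 3
        rw [hw, combo_apply] at this
        simp [show ((3:ZMod 17) = 0) ↔ False by decide, show ((3:ZMod 17) = 6) ↔ False by decide] at this
        exact hj0 (by simpa using this)
      · have := congrFun hweq 6
        rw [hw, combo_apply] at this
        simp [show ((6:ZMod 17) = 0) ↔ False by decide, show ((6:ZMod 17) = 3) ↔ False by decide] at this
        exact hj0 (by simpa using this)
    have hneg := negdef hA w h0 hwne
    have hzero : w ⬝ᵥ (A *ᵥ w) = 0 := by
      rw [hw, qexpand4, zaa, zbb, zcc, zab, zac, zbc, zba, zca, zcb]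
      ring
    rw [hzero] at hneg
    exact lt_irrefl 0 hneg
  have hcard3 : P.card = 3 := le_antisymm (by omega) h3le
  obtain ⟨i1, i2, i3, h12, h13, h23, hPeq⟩ := Finset.card_eq_three.mp hcard3
  refine ⟨i1, i2, i3, h12, h13, h23, ?_⟩
  intro i hi
  have hiP : i ∈ P := Finset.mem_filter.mpr ⟨Finset.mem_univ _, hi⟩
  rw [hPeq] at hiP
  simpa using hiP

set_option maxHeartbeats 2000000 in
/-- **Sinkovic's theorem.** The Paley graph `G` on 17 vertices has independence number `3`,
but every symmetric weighted adjacency matrix of `G` has at least `4` non-negative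
eigenvalues (counted with multiplicity). -/
theorem sinkovic_paley17 :
    ((∃ s : Finset (ZMod 17), (∀ i ∈ s, ∀ j ∈ s, ¬ paley17.Adj i j) ∧ s.card = 3) ∧
      ∀ s : Finset (ZMod 17), (∀ i ∈ s, ∀ j ∈ s, ¬ paley17.Adj i j) → s.card ≤ 3) ∧
    ∀ (A : Matrix (ZMod 17) (ZMod 17) ℝ) (hA : A.IsHermitian),
      (∀ x y, ¬ paley17.Adj x y → A x y = 0) →
      4 ≤ Fintype.card {i : ZMod 17 // 0 ≤ hA.eigenvalues i} := by
  refine ⟨⟨⟨({0, 3, 6} : Finset (ZMod 17)), by decide, by decide⟩, ?_⟩, ?_⟩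
  · -- independence number at most 3
    intro s hs
    by_contra hgt
    push_neg at hgt
    obtain ⟨t, hts, htcard⟩ := Finset.exists_subset_card_eq (s := s) (n := 4) (by omega)
    obtain ⟨a, ha⟩ := Finset.card_pos.mp (by omega : 0 < t.card)
    have h3 : (t.erase a).card = 3 := by
      rw [Finset.card_erase_of_mem ha, htcard]
    obtain ⟨b, c, d, hbc, hbd, hcd, habc⟩ := Finset.card_eq_three.mp h3
    have hb : b ∈ t.erase a := by rw [habc]; simp
    have hc : c ∈ t.erase a := by rw [habc]; simp
    have hd : d ∈ t.erase a := by rw [habc]; simp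
    have hab : a ≠ b := (Finset.ne_of_mem_erase hb).symm
    have hac : a ≠ c := (Finset.ne_of_mem_erase hc).symm
    have had : a ≠ d := (Finset.ne_of_mem_erase hd).symm
    have hat : a ∈ s := hts ha
    have hbt : b ∈ s := hts (Finset.mem_of_mem_erase hb)
    have hct : c ∈ s := hts (Finset.mem_of_mem_erase hc)
    have hdt : d ∈ s := hts (Finset.mem_of_mem_erase hd)
    rcases adj_of_four hab hac had hbc hbd hcd with h|h|h|h|h|h
    · exact hs a hat b hbt h
    · exact hs a hat c hct h
    · exact hs a hat d hdt h
    · exact hs b hbt c hct h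
    · exact hs b hbt d hdt h
    · exact hs c hct d hdt h
  · -- the spectral statement
    intro A hA hsupp
    by_contra hcard4
    push_neg at hcard4
    have hcard : Fintype.card {i : ZMod 17 // 0 ≤ hA.eigenvalues i} ≤ 3 := by omega
    obtain ⟨i1, i2, i3, h12, h13, h23, hP⟩ := exists_P3 hA
      (hsupp 0 0 (by decide)) (hsupp 3 3 (by decide)) (hsupp 6 6 (by decide))
      (hsupp 0 3 (by decide)) (hsupp 0 6 (by decide)) (hsupp 3 6 (by decide))
      (hsupp 3 0 (by decide)) (hsupp 6 0 (by decide)) (hsupp 6 3 (by decide)) hcard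
    have F0 : 0 < -(A 5 13 * Dd hA i1 i2 i3 2 5 8 * Dd hA i1 i2 i3 2 8 13) := by
      have h := key_rel hA i1 i2 i3 hP 2 8 5 13 (by decide) (by decide) (by decide) (by decide) (by decide) (by decide)
        (hsupp 2 2 (by decide)) (hsupp 8 8 (by decide)) (hsupp 5 5 (by decide)) (hsupp 13 13 (by decide)) (hsupp 2 8 (by decide)) (hsupp 2 5 (by decide)) (hsupp 8 5 (by decide))
        (hsupp 2 13 (by decide)) (hsupp 8 13 (by decide)) (hsupp 8 2 (by decide)) (hsupp 5 2 (by decide)) (hsupp 5 8 (by decide)) (hsupp 13 2 (by decide)) (hsupp 13 8 (by decide))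
      have e : -(A 5 13 * Dd hA i1 i2 i3 2 5 8 * Dd hA i1 i2 i3 2 8 13)
          = A 5 13 * Dd hA i1 i2 i3 2 8 5 * Dd hA i1 i2 i3 2 8 13 := by
        simp only [Dd_expand]
        try ring
      rw [e]; exact h
    have F1 : 0 < (A 2 15 * Dd hA i1 i2 i3 2 5 8 * Dd hA i1 i2 i3 5 8 15) := by
      have h := key_rel hA i1 i2 i3 hP 5 8 2 15 (by decide) (by decide) (by decide) (by decide) (by decide) (by decide)
        (hsupp 5 5 (by decide)) (hsupp 8 8 (by decide)) (hsupp 2 2 (by decide)) (hsupp 15 15 (by decide)) (hsupp 5 8 (by decide)) (hsupp 5 2 (by decide)) (hsupp 8 2 (by decide))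
        (hsupp 5 15 (by decide)) (hsupp 8 15 (by decide)) (hsupp 8 5 (by decide)) (hsupp 2 5 (by decide)) (hsupp 2 8 (by decide)) (hsupp 15 5 (by decide)) (hsupp 15 8 (by decide))
      have e : (A 2 15 * Dd hA i1 i2 i3 2 5 8 * Dd hA i1 i2 i3 5 8 15)
          = A 2 15 * Dd hA i1 i2 i3 5 8 2 * Dd hA i1 i2 i3 5 8 15 := by
        simp only [Dd_expand]
        try ring
      rw [e]; exact h
    have F2 : 0 < (A 2 3 * Dd hA i1 i2 i3 2 8 13 * Dd hA i1 i2 i3 3 8 13) := by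
      have h := key_rel hA i1 i2 i3 hP 8 13 2 3 (by decide) (by decide) (by decide) (by decide) (by decide) (by decide)
        (hsupp 8 8 (by decide)) (hsupp 13 13 (by decide)) (hsupp 2 2 (by decide)) (hsupp 3 3 (by decide)) (hsupp 8 13 (by decide)) (hsupp 8 2 (by decide)) (hsupp 13 2 (by decide))
        (hsupp 8 3 (by decide)) (hsupp 13 3 (by decide)) (hsupp 13 8 (by decide)) (hsupp 2 8 (by decide)) (hsupp 2 13 (by decide)) (hsupp 3 8 (by decide)) (hsupp 3 13 (by decide))
      have e : (A 2 3 * Dd hA i1 i2 i3 2 8 13 * Dd hA i1 i2 i3 3 8 13)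
          = A 2 3 * Dd hA i1 i2 i3 8 13 2 * Dd hA i1 i2 i3 8 13 3 := by
        simp only [Dd_expand]
        try ring
      rw [e]; exact h
    have F3 : 0 < (A 12 16 * Dd hA i1 i2 i3 2 9 12 * Dd hA i1 i2 i3 2 9 16) := by
      have h := key_rel hA i1 i2 i3 hP 2 9 12 16 (by decide) (by decide) (by decide) (by decide) (by decide) (by decide)
        (hsupp 2 2 (by decide)) (hsupp 9 9 (by decide)) (hsupp 12 12 (by decide)) (hsupp 16 16 (by decide)) (hsupp 2 9 (by decide)) (hsupp 2 12 (by decide)) (hsupp 9 12 (by decide))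
        (hsupp 2 16 (by decide)) (hsupp 9 16 (by decide)) (hsupp 9 2 (by decide)) (hsupp 12 2 (by decide)) (hsupp 12 9 (by decide)) (hsupp 16 2 (by decide)) (hsupp 16 9 (by decide))
      have e : (A 12 16 * Dd hA i1 i2 i3 2 9 12 * Dd hA i1 i2 i3 2 9 16)
          = A 12 16 * Dd hA i1 i2 i3 2 9 12 * Dd hA i1 i2 i3 2 9 16 := by
        simp only [Dd_expand]
        try ring
      rw [e]; exact h
    have F4 : 0 < (A 2 15 * Dd hA i1 i2 i3 2 9 12 * Dd hA i1 i2 i3 9 12 15) := by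
      have h := key_rel hA i1 i2 i3 hP 9 12 2 15 (by decide) (by decide) (by decide) (by decide) (by decide) (by decide)
        (hsupp 9 9 (by decide)) (hsupp 12 12 (by decide)) (hsupp 2 2 (by decide)) (hsupp 15 15 (by decide)) (hsupp 9 12 (by decide)) (hsupp 9 2 (by decide)) (hsupp 12 2 (by decide))
        (hsupp 9 15 (by decide)) (hsupp 12 15 (by decide)) (hsupp 12 9 (by decide)) (hsupp 2 9 (by decide)) (hsupp 2 12 (by decide)) (hsupp 15 9 (by decide)) (hsupp 15 12 (by decide))
      have e : (A 2 15 * Dd hA i1 i2 i3 2 9 12 * Dd hA i1 i2 i3 9 12 15)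
          = A 2 15 * Dd hA i1 i2 i3 9 12 2 * Dd hA i1 i2 i3 9 12 15 := by
        simp only [Dd_expand]
        try ring
      rw [e]; exact h
    have F5 : 0 < (A 14 16 * Dd hA i1 i2 i3 2 9 14 * Dd hA i1 i2 i3 2 9 16) := by
      have h := key_rel hA i1 i2 i3 hP 2 9 14 16 (by decide) (by decide) (by decide) (by decide) (by decide) (by decide)
        (hsupp 2 2 (by decide)) (hsupp 9 9 (by decide)) (hsupp 14 14 (by decide)) (hsupp 16 16 (by decide)) (hsupp 2 9 (by decide)) (hsupp 2 14 (by decide)) (hsupp 9 14 (by decide))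
        (hsupp 2 16 (by decide)) (hsupp 9 16 (by decide)) (hsupp 9 2 (by decide)) (hsupp 14 2 (by decide)) (hsupp 14 9 (by decide)) (hsupp 16 2 (by decide)) (hsupp 16 9 (by decide))
      have e : (A 14 16 * Dd hA i1 i2 i3 2 9 14 * Dd hA i1 i2 i3 2 9 16)
          = A 14 16 * Dd hA i1 i2 i3 2 9 14 * Dd hA i1 i2 i3 2 9 16 := by
        simp only [Dd_expand]
        try ring
      rw [e]; exact h
    have F6 : 0 < (A 2 3 * Dd hA i1 i2 i3 2 9 14 * Dd hA i1 i2 i3 3 9 14) := by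
      have h := key_rel hA i1 i2 i3 hP 9 14 2 3 (by decide) (by decide) (by decide) (by decide) (by decide) (by decide)
        (hsupp 9 9 (by decide)) (hsupp 14 14 (by decide)) (hsupp 2 2 (by decide)) (hsupp 3 3 (by decide)) (hsupp 9 14 (by decide)) (hsupp 9 2 (by decide)) (hsupp 14 2 (by decide))
        (hsupp 9 3 (by decide)) (hsupp 14 3 (by decide)) (hsupp 14 9 (by decide)) (hsupp 2 9 (by decide)) (hsupp 2 14 (by decide)) (hsupp 3 9 (by decide)) (hsupp 3 14 (by decide))
      have e : (A 2 3 * Dd hA i1 i2 i3 2 9 14 * Dd hA i1 i2 i3 3 9 14)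
          = A 2 3 * Dd hA i1 i2 i3 9 14 2 * Dd hA i1 i2 i3 9 14 3 := by
        simp only [Dd_expand]
        try ring
      rw [e]; exact h
    have F7 : 0 < (A 3 12 * Dd hA i1 i2 i3 3 6 9 * Dd hA i1 i2 i3 6 9 12) := by
      have h := key_rel hA i1 i2 i3 hP 6 9 3 12 (by decide) (by decide) (by decide) (by decide) (by decide) (by decide)
        (hsupp 6 6 (by decide)) (hsupp 9 9 (by decide)) (hsupp 3 3 (by decide)) (hsupp 12 12 (by decide)) (hsupp 6 9 (by decide)) (hsupp 6 3 (by decide)) (hsupp 9 3 (by decide))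
        (hsupp 6 12 (by decide)) (hsupp 9 12 (by decide)) (hsupp 9 6 (by decide)) (hsupp 3 6 (by decide)) (hsupp 3 9 (by decide)) (hsupp 12 6 (by decide)) (hsupp 12 9 (by decide))
      have e : (A 3 12 * Dd hA i1 i2 i3 3 6 9 * Dd hA i1 i2 i3 6 9 12)
          = A 3 12 * Dd hA i1 i2 i3 6 9 3 * Dd hA i1 i2 i3 6 9 12 := by
        simp only [Dd_expand]
        try ring
      rw [e]; exact h
    have F8 : 0 < (A 3 16 * Dd hA i1 i2 i3 3 6 9 * Dd hA i1 i2 i3 6 9 16) := by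
      have h := key_rel hA i1 i2 i3 hP 6 9 3 16 (by decide) (by decide) (by decide) (by decide) (by decide) (by decide)
        (hsupp 6 6 (by decide)) (hsupp 9 9 (by decide)) (hsupp 3 3 (by decide)) (hsupp 16 16 (by decide)) (hsupp 6 9 (by decide)) (hsupp 6 3 (by decide)) (hsupp 9 3 (by decide))
        (hsupp 6 16 (by decide)) (hsupp 9 16 (by decide)) (hsupp 9 6 (by decide)) (hsupp 3 6 (by decide)) (hsupp 3 9 (by decide)) (hsupp 16 6 (by decide)) (hsupp 16 9 (by decide))
      have e : (A 3 16 * Dd hA i1 i2 i3 3 6 9 * Dd hA i1 i2 i3 6 9 16)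
          = A 3 16 * Dd hA i1 i2 i3 6 9 3 * Dd hA i1 i2 i3 6 9 16 := by
        simp only [Dd_expand]
        try ring
      rw [e]; exact h
    have F9 : 0 < (A 8 10 * Dd hA i1 i2 i3 3 8 13 * Dd hA i1 i2 i3 3 10 13) := by
      have h := key_rel hA i1 i2 i3 hP 3 13 8 10 (by decide) (by decide) (by decide) (by decide) (by decide) (by decide)
        (hsupp 3 3 (by decide)) (hsupp 13 13 (by decide)) (hsupp 8 8 (by decide)) (hsupp 10 10 (by decide)) (hsupp 3 13 (by decide)) (hsupp 3 8 (by decide)) (hsupp 13 8 (by decide))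
        (hsupp 3 10 (by decide)) (hsupp 13 10 (by decide)) (hsupp 13 3 (by decide)) (hsupp 8 3 (by decide)) (hsupp 8 13 (by decide)) (hsupp 10 3 (by decide)) (hsupp 10 13 (by decide))
      have e : (A 8 10 * Dd hA i1 i2 i3 3 8 13 * Dd hA i1 i2 i3 3 10 13)
          = A 8 10 * Dd hA i1 i2 i3 3 13 8 * Dd hA i1 i2 i3 3 13 10 := by
        simp only [Dd_expand]
        try ring
      rw [e]; exact h
    have F10 : 0 < (A 3 4 * Dd hA i1 i2 i3 3 9 14 * Dd hA i1 i2 i3 4 9 14) := by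
      have h := key_rel hA i1 i2 i3 hP 9 14 3 4 (by decide) (by decide) (by decide) (by decide) (by decide) (by decide)
        (hsupp 9 9 (by decide)) (hsupp 14 14 (by decide)) (hsupp 3 3 (by decide)) (hsupp 4 4 (by decide)) (hsupp 9 14 (by decide)) (hsupp 9 3 (by decide)) (hsupp 14 3 (by decide))
        (hsupp 9 4 (by decide)) (hsupp 14 4 (by decide)) (hsupp 14 9 (by decide)) (hsupp 3 9 (by decide)) (hsupp 3 14 (by decide)) (hsupp 4 9 (by decide)) (hsupp 4 14 (by decide))
      have e : (A 3 4 * Dd hA i1 i2 i3 3 9 14 * Dd hA i1 i2 i3 4 9 14)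
          = A 3 4 * Dd hA i1 i2 i3 9 14 3 * Dd hA i1 i2 i3 9 14 4 := by
        simp only [Dd_expand]
        try ring
      rw [e]; exact h
    have F11 : 0 < (A 3 4 * Dd hA i1 i2 i3 3 9 15 * Dd hA i1 i2 i3 4 9 15) := by
      have h := key_rel hA i1 i2 i3 hP 9 15 3 4 (by decide) (by decide) (by decide) (by decide) (by decide) (by decide)
        (hsupp 9 9 (by decide)) (hsupp 15 15 (by decide)) (hsupp 3 3 (by decide)) (hsupp 4 4 (by decide)) (hsupp 9 15 (by decide)) (hsupp 9 3 (by decide)) (hsupp 15 3 (by decide))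
        (hsupp 9 4 (by decide)) (hsupp 15 4 (by decide)) (hsupp 15 9 (by decide)) (hsupp 3 9 (by decide)) (hsupp 3 15 (by decide)) (hsupp 4 9 (by decide)) (hsupp 4 15 (by decide))
      have e : (A 3 4 * Dd hA i1 i2 i3 3 9 15 * Dd hA i1 i2 i3 4 9 15)
          = A 3 4 * Dd hA i1 i2 i3 9 15 3 * Dd hA i1 i2 i3 9 15 4 := by
        simp only [Dd_expand]
        try ring
      rw [e]; exact h
    have F12 : 0 < -(A 3 12 * Dd hA i1 i2 i3 3 9 15 * Dd hA i1 i2 i3 9 12 15) := by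
      have h := key_rel hA i1 i2 i3 hP 9 15 3 12 (by decide) (by decide) (by decide) (by decide) (by decide) (by decide)
        (hsupp 9 9 (by decide)) (hsupp 15 15 (by decide)) (hsupp 3 3 (by decide)) (hsupp 12 12 (by decide)) (hsupp 9 15 (by decide)) (hsupp 9 3 (by decide)) (hsupp 15 3 (by decide))
        (hsupp 9 12 (by decide)) (hsupp 15 12 (by decide)) (hsupp 15 9 (by decide)) (hsupp 3 9 (by decide)) (hsupp 3 15 (by decide)) (hsupp 12 9 (by decide)) (hsupp 12 15 (by decide))
      have e : -(A 3 12 * Dd hA i1 i2 i3 3 9 15 * Dd hA i1 i2 i3 9 12 15)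
          = A 3 12 * Dd hA i1 i2 i3 9 15 3 * Dd hA i1 i2 i3 9 15 12 := by
        simp only [Dd_expand]
        try ring
      rw [e]; exact h
    have F13 : 0 < (A 3 16 * Dd hA i1 i2 i3 3 10 13 * Dd hA i1 i2 i3 10 13 16) := by
      have h := key_rel hA i1 i2 i3 hP 10 13 3 16 (by decide) (by decide) (by decide) (by decide) (by decide) (by decide)
        (hsupp 10 10 (by decide)) (hsupp 13 13 (by decide)) (hsupp 3 3 (by decide)) (hsupp 16 16 (by decide)) (hsupp 10 13 (by decide)) (hsupp 10 3 (by decide)) (hsupp 13 3 (by decide))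
        (hsupp 10 16 (by decide)) (hsupp 13 16 (by decide)) (hsupp 13 10 (by decide)) (hsupp 3 10 (by decide)) (hsupp 3 13 (by decide)) (hsupp 16 10 (by decide)) (hsupp 16 13 (by decide))
      have e : (A 3 16 * Dd hA i1 i2 i3 3 10 13 * Dd hA i1 i2 i3 10 13 16)
          = A 3 16 * Dd hA i1 i2 i3 10 13 3 * Dd hA i1 i2 i3 10 13 16 := by
        simp only [Dd_expand]
        try ring
      rw [e]; exact h
    have F14 : 0 < (A 14 16 * Dd hA i1 i2 i3 4 9 14 * Dd hA i1 i2 i3 4 9 16) := by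
      have h := key_rel hA i1 i2 i3 hP 4 9 14 16 (by decide) (by decide) (by decide) (by decide) (by decide) (by decide)
        (hsupp 4 4 (by decide)) (hsupp 9 9 (by decide)) (hsupp 14 14 (by decide)) (hsupp 16 16 (by decide)) (hsupp 4 9 (by decide)) (hsupp 4 14 (by decide)) (hsupp 9 14 (by decide))
        (hsupp 4 16 (by decide)) (hsupp 9 16 (by decide)) (hsupp 9 4 (by decide)) (hsupp 14 4 (by decide)) (hsupp 14 9 (by decide)) (hsupp 16 4 (by decide)) (hsupp 16 9 (by decide))
      have e : (A 14 16 * Dd hA i1 i2 i3 4 9 14 * Dd hA i1 i2 i3 4 9 16)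
          = A 14 16 * Dd hA i1 i2 i3 4 9 14 * Dd hA i1 i2 i3 4 9 16 := by
        simp only [Dd_expand]
        try ring
      rw [e]; exact h
    have F15 : 0 < (A 15 16 * Dd hA i1 i2 i3 4 9 15 * Dd hA i1 i2 i3 4 9 16) := by
      have h := key_rel hA i1 i2 i3 hP 4 9 15 16 (by decide) (by decide) (by decide) (by decide) (by decide) (by decide)
        (hsupp 4 4 (by decide)) (hsupp 9 9 (by decide)) (hsupp 15 15 (by decide)) (hsupp 16 16 (by decide)) (hsupp 4 9 (by decide)) (hsupp 4 15 (by decide)) (hsupp 9 15 (by decide))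
        (hsupp 4 16 (by decide)) (hsupp 9 16 (by decide)) (hsupp 9 4 (by decide)) (hsupp 15 4 (by decide)) (hsupp 15 9 (by decide)) (hsupp 16 4 (by decide)) (hsupp 16 9 (by decide))
      have e : (A 15 16 * Dd hA i1 i2 i3 4 9 15 * Dd hA i1 i2 i3 4 9 16)
          = A 15 16 * Dd hA i1 i2 i3 4 9 15 * Dd hA i1 i2 i3 4 9 16 := by
        simp only [Dd_expand]
        try ring
      rw [e]; exact h
    have F16 : 0 < (A 8 10 * Dd hA i1 i2 i3 5 8 15 * Dd hA i1 i2 i3 5 10 15) := by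
      have h := key_rel hA i1 i2 i3 hP 5 15 8 10 (by decide) (by decide) (by decide) (by decide) (by decide) (by decide)
        (hsupp 5 5 (by decide)) (hsupp 15 15 (by decide)) (hsupp 8 8 (by decide)) (hsupp 10 10 (by decide)) (hsupp 5 15 (by decide)) (hsupp 5 8 (by decide)) (hsupp 15 8 (by decide))
        (hsupp 5 10 (by decide)) (hsupp 15 10 (by decide)) (hsupp 15 5 (by decide)) (hsupp 8 5 (by decide)) (hsupp 8 15 (by decide)) (hsupp 10 5 (by decide)) (hsupp 10 15 (by decide))
      have e : (A 8 10 * Dd hA i1 i2 i3 5 8 15 * Dd hA i1 i2 i3 5 10 15)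
          = A 8 10 * Dd hA i1 i2 i3 5 15 8 * Dd hA i1 i2 i3 5 15 10 := by
        simp only [Dd_expand]
        try ring
      rw [e]; exact h
    have F17 : 0 < (A 15 16 * Dd hA i1 i2 i3 5 10 15 * Dd hA i1 i2 i3 5 10 16) := by
      have h := key_rel hA i1 i2 i3 hP 5 10 15 16 (by decide) (by decide) (by decide) (by decide) (by decide) (by decide)
        (hsupp 5 5 (by decide)) (hsupp 10 10 (by decide)) (hsupp 15 15 (by decide)) (hsupp 16 16 (by decide)) (hsupp 5 10 (by decide)) (hsupp 5 15 (by decide)) (hsupp 10 15 (by decide))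
        (hsupp 5 16 (by decide)) (hsupp 10 16 (by decide)) (hsupp 10 5 (by decide)) (hsupp 15 5 (by decide)) (hsupp 15 10 (by decide)) (hsupp 16 5 (by decide)) (hsupp 16 10 (by decide))
      have e : (A 15 16 * Dd hA i1 i2 i3 5 10 15 * Dd hA i1 i2 i3 5 10 16)
          = A 15 16 * Dd hA i1 i2 i3 5 10 15 * Dd hA i1 i2 i3 5 10 16 := by
        simp only [Dd_expand]
        try ring
      rw [e]; exact h
    have F18 : 0 < -(A 5 13 * Dd hA i1 i2 i3 5 10 16 * Dd hA i1 i2 i3 10 13 16) := by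
      have h := key_rel hA i1 i2 i3 hP 10 16 5 13 (by decide) (by decide) (by decide) (by decide) (by decide) (by decide)
        (hsupp 10 10 (by decide)) (hsupp 16 16 (by decide)) (hsupp 5 5 (by decide)) (hsupp 13 13 (by decide)) (hsupp 10 16 (by decide)) (hsupp 10 5 (by decide)) (hsupp 16 5 (by decide))
        (hsupp 10 13 (by decide)) (hsupp 16 13 (by decide)) (hsupp 16 10 (by decide)) (hsupp 5 10 (by decide)) (hsupp 5 16 (by decide)) (hsupp 13 10 (by decide)) (hsupp 13 16 (by decide))
      have e : -(A 5 13 * Dd hA i1 i2 i3 5 10 16 * Dd hA i1 i2 i3 10 13 16)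
          = A 5 13 * Dd hA i1 i2 i3 10 16 5 * Dd hA i1 i2 i3 10 16 13 := by
        simp only [Dd_expand]
        try ring
      rw [e]; exact h
    have F19 : 0 < (A 12 16 * Dd hA i1 i2 i3 6 9 12 * Dd hA i1 i2 i3 6 9 16) := by
      have h := key_rel hA i1 i2 i3 hP 6 9 12 16 (by decide) (by decide) (by decide) (by decide) (by decide) (by decide)
        (hsupp 6 6 (by decide)) (hsupp 9 9 (by decide)) (hsupp 12 12 (by decide)) (hsupp 16 16 (by decide)) (hsupp 6 9 (by decide)) (hsupp 6 12 (by decide)) (hsupp 9 12 (by decide))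
        (hsupp 6 16 (by decide)) (hsupp 9 16 (by decide)) (hsupp 9 6 (by decide)) (hsupp 12 6 (by decide)) (hsupp 12 9 (by decide)) (hsupp 16 6 (by decide)) (hsupp 16 9 (by decide))
      have e : (A 12 16 * Dd hA i1 i2 i3 6 9 12 * Dd hA i1 i2 i3 6 9 16)
          = A 12 16 * Dd hA i1 i2 i3 6 9 12 * Dd hA i1 i2 i3 6 9 16 := by
        simp only [Dd_expand]
        try ring
      rw [e]; exact h
    have HP0 := F0
    have HP1 := mul_pos HP0 F1
    have HP2 := mul_pos HP1 F2
    have HP3 := mul_pos HP2 F3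
    have HP4 := mul_pos HP3 F4
    have HP5 := mul_pos HP4 F5
    have HP6 := mul_pos HP5 F6
    have HP7 := mul_pos HP6 F7
    have HP8 := mul_pos HP7 F8
    have HP9 := mul_pos HP8 F9
    have HP10 := mul_pos HP9 F10
    have HP11 := mul_pos HP10 F11
    have HP12 := mul_pos HP11 F12
    have HP13 := mul_pos HP12 F13
    have HP14 := mul_pos HP13 F14
    have HP15 := mul_pos HP14 F15
    have HP16 := mul_pos HP15 F16
    have HP17 := mul_pos HP16 F17
    have HP18 := mul_pos HP17 F18
    have HP19 := mul_pos HP18 F19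
    have hEq : -(A 5 13 * Dd hA i1 i2 i3 2 5 8 * Dd hA i1 i2 i3 2 8 13) * (A 2 15 * Dd hA i1 i2 i3 2 5 8 * Dd hA i1 i2 i3 5 8 15) * (A 2 3 * Dd hA i1 i2 i3 2 8 13 * Dd hA i1 i2 i3 3 8 13) * (A 12 16 * Dd hA i1 i2 i3 2 9 12 * Dd hA i1 i2 i3 2 9 16) * (A 2 15 * Dd hA i1 i2 i3 2 9 12 * Dd hA i1 i2 i3 9 12 15) * (A 14 16 * Dd hA i1 i2 i3 2 9 14 * Dd hA i1 i2 i3 2 9 16) * (A 2 3 * Dd hA i1 i2 i3 2 9 14 * Dd hA i1 i2 i3 3 9 14) * (A 3 12 * Dd hA i1 i2 i3 3 6 9 * Dd hA i1 i2 i3 6 9 12) * (A 3 16 * Dd hA i1 i2 i3 3 6 9 * Dd hA i1 i2 i3 6 9 16) * (A 8 10 * Dd hA i1 i2 i3 3 8 13 * Dd hA i1 i2 i3 3 10 13) * (A 3 4 * Dd hA i1 i2 i3 3 9 14 * Dd hA i1 i2 i3 4 9 14) * (A 3 4 * Dd hA i1 i2 i3 3 9 15 * Dd hA i1 i2 i3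 4 9 15) * -(A 3 12 * Dd hA i1 i2 i3 3 9 15 * Dd hA i1 i2 i3 9 12 15) * (A 3 16 * Dd hA i1 i2 i3 3 10 13 * Dd hA i1 i2 i3 10 13 16) * (A 14 16 * Dd hA i1 i2 i3 4 9 14 * Dd hA i1 i2 i3 4 9 16) * (A 15 16 * Dd hA i1 i2 i3 4 9 15 * Dd hA i1 i2 i3 4 9 16) * (A 8 10 * Dd hA i1 i2 i3 5 8 15 * Dd hA i1 i2 i3 5 10 15) * (A 15 16 * Dd hA i1 i2 i3 5 10 15 * Dd hA i1 i2 i3 5 10 16) * -(A 5 13 * Dd hA i1 i2 i3 5 10 16 * Dd hA i1 i2 i3 10 13 16) * (A 12 16 * Dd hA i1 i2 i3 6 9 12 * Dd hA i1 i2 i3 6 9 16) = -(A 2 3 * A 2 15 * A 3 4 * A 3 12 * A 3 16 * A 5 13 * A 8 10 * A 12 16 * A 14 16 * A 15 16 * Dd hA i1 i2 i3 2 5 8 * Dd hA i1 i2 i3 2 8 13 * Dd hA i1 i2 i3 2 9 12 * Dd hA i1 i2 i3 2 9 14 * Dd hA i1 i2 i3 2 9 16 * Dd hA i1 i2 i3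 3 6 9 * Dd hA i1 i2 i3 3 8 13 * Dd hA i1 i2 i3 3 9 14 * Dd hA i1 i2 i3 3 9 15 * Dd hA i1 i2 i3 3 10 13 * Dd hA i1 i2 i3 4 9 14 * Dd hA i1 i2 i3 4 9 15 * Dd hA i1 i2 i3 4 9 16 * Dd hA i1 i2 i3 5 8 15 * Dd hA i1 i2 i3 5 10 15 * Dd hA i1 i2 i3 5 10 16 * Dd hA i1 i2 i3 6 9 12 * Dd hA i1 i2 i3 6 9 16 * Dd hA i1 i2 i3 9 12 15 * Dd hA i1 i2 i3 10 13 16)^2 := by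
      ring
    rw [hEq] at HP19
    have hsq := sq_nonneg (A 2 3 * A 2 15 * A 3 4 * A 3 12 * A 3 16 * A 5 13 * A 8 10 * A 12 16 * A 14 16 * A 15 16 * Dd hA i1 i2 i3 2 5 8 * Dd hA i1 i2 i3 2 8 13 * Dd hA i1 i2 i3 2 9 12 * Dd hA i1 i2 i3 2 9 14 * Dd hA i1 i2 i3 2 9 16 * Dd hA i1 i2 i3 3 6 9 * Dd hA i1 i2 i3 3 8 13 * Dd hA i1 i2 i3 3 9 14 * Dd hA i1 i2 i3 3 9 15 * Dd hA i1 i2 i3 3 10 13 * Dd hA i1 i2 i3 4 9 14 * Dd hA i1 i2 i3 4 9 15 * Dd hA i1 i2 i3 4 9 16 * Dd hA i1 i2 i3 5 8 15 * Dd hA i1 i2 i3 5 10 15 * Dd hA i1 i2 i3 5 10 16 * Dd hA i1 i2 i3 6 9 12 * Dd hA i1 i2 i3 6 9 16 * Dd hA i1 i2 i3 9 12 15 * Dd hA i1 i2 i3 10 13 16)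
    linarith
end

section
/- Let Y be a real-valued random variable on a probability space with E[Y⁴] < ∞, and let y > 0 be a real number. Then P(Y ≥ 0) ≤ 1 − (4/9)(2√3 − 3)(−2E[Y]/y + 3E[Y²]/y² − E[Y⁴]/y⁴). -/
open MeasureTheory

lemma hzz_key (t : ℝ) :
    (if 0 ≤ t then (1:ℝ) else 0) ≤
      1 - (4 / 9) * (2 * Real.sqrt 3 - 3) * (-(2*t) + 3*t^2 - t^4) := by
  set r := Real.sqrt 3 with hrdef
  have hr : r ^ 2 = 3 := Real.sq_sqrt (by norm_num)
  have hr1 : (1:ℝ) ≤ r := by nlinarith [Real.sqrt_nonneg 3]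
  have hc0 : (0:ℝ) ≤ 4 / 9 * (2 * r - 3) := by nlinarith
  by_cases ht : 0 ≤ t
  · rw [if_pos ht]
    have hprod : 0 ≤ t * (t - 1)^2 * (t + 2) :=
      mul_nonneg (mul_nonneg ht (sq_nonneg _)) (by linarith)
    nlinarith [mul_nonneg hc0 hprod]
  · rw [if_neg ht]
    push_neg at ht
    have hq : 0 ≤ t^2 - (1 + r) * t + 3/2 * r := by
      nlinarith [mul_nonneg (by linarith : (0:ℝ) ≤ 1 + r) (by linarith : 0 ≤ -t), sq_nonneg t]
    have hprod : 0 ≤ (2*t + 1 + r)^2 * (t^2 - (1 + r) * t + 3/2 * r) :=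
      mul_nonneg (sq_nonneg _) hq
    have identity : 1 - (4 / 9) * (2 * r - 3) * (-(2*t) + 3*t^2 - t^4)
        = (4 / 9 * (2 * r - 3) / 4) * ((2*t + 1 + r)^2 * (t^2 - (1 + r) * t + 3/2 * r)) := by
      linear_combination ((2/9)*t*r^2 - (1/3)*r^2 + (2/3)*t^2*r - t*r - (1/6)*r + t
        - 1/3 - t^2) * hr
    rw [identity]
    exact mul_nonneg (by linarith) hprod

/-- **He–Zhang–Zhang inequality.** For a real random variable `Y` with finite fourth moment
and any `y > 0`,
`P(Y ≥ 0) ≤ 1 - (4/9)(2√3 - 3)(-2E[Y]/y + 3E[Y²]/y² - E[Y⁴]/y⁴)`. -/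
theorem hzz_inequality {Ω : Type*} [MeasurableSpace Ω] (μ : Measure Ω) [IsProbabilityMeasure μ]
    (Y : Ω → ℝ) (hY : Measurable Y) (hY4 : Integrable (fun ω => (Y ω) ^ 4) μ)
    (y : ℝ) (hy : 0 < y) :
    (μ {ω | 0 ≤ Y ω}).toReal ≤
      1 - (4 / 9) * (2 * Real.sqrt 3 - 3) *
        (-(2 * (∫ ω, Y ω ∂μ)) / y + 3 * (∫ ω, (Y ω) ^ 2 ∂μ) / y ^ 2
          - (∫ ω, (Y ω) ^ 4 ∂μ) / y ^ 4) := by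
  have hs : MeasurableSet {ω | 0 ≤ Y ω} := measurableSet_le measurable_const hY
  -- integrability
  have hY1 : Integrable Y μ := by
    refine (hY4.add (integrable_const 1)).mono' hY.aestronglyMeasurable ?_
    filter_upwards with ω
    simp only [Real.norm_eq_abs, Pi.add_apply]
    have hp : |Y ω| ^ 4 = Y ω ^ 4 := by rw [← abs_pow, abs_of_nonneg (by positivity)]
    rcases le_or_gt |Y ω| 1 with h | h
    · have : (0:ℝ) ≤ Y ω ^ 4 := by positivity
      linarith
    · have h1 : |Y ω| ≤ |Y ω| ^ 4 := by
        calc |Y ω| = |Y ω| ^ 1 := (pow_one _).symm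
        _ ≤ |Y ω| ^ 4 := pow_le_pow_right₀ h.le (by norm_num)
      linarith [hp ▸ h1]
  have hY2 : Integrable (fun ω => (Y ω) ^ 2) μ := by
    refine (hY4.add (integrable_const 1)).mono' (hY.pow_const 2).aestronglyMeasurable ?_
    filter_upwards with ω
    simp only [Real.norm_eq_abs, Pi.add_apply]
    rw [abs_of_nonneg (by positivity : (0:ℝ) ≤ Y ω ^ 2)]
    nlinarith [sq_nonneg ((Y ω)^2 - 1)]
  have ha : Integrable (fun ω => -(2 * Y ω) / y) μ := ((hY1.const_mul 2).neg).div_const y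
  have hb : Integrable (fun ω => 3 * (Y ω)^2 / y^2) μ := (hY2.const_mul 3).div_const _
  have hd : Integrable (fun ω => (Y ω)^4 / y^4) μ := hY4.div_const _
  have hg : Integrable (fun ω => -(2 * Y ω) / y + 3 * (Y ω)^2 / y^2 - (Y ω)^4 / y^4) μ :=
    (ha.add hb).sub hd
  set c : ℝ := 4 / 9 * (2 * Real.sqrt 3 - 3) with hc
  have hF : Integrable
      (fun ω => 1 - c * (-(2 * Y ω) / y + 3 * (Y ω)^2 / y^2 - (Y ω)^4 / y^4)) μ :=
    (integrable_const 1).sub (hg.const_mul c)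
  have pointwise : ∀ ω,
      Set.indicator {ω | 0 ≤ Y ω} (fun _ => (1:ℝ)) ω ≤
        1 - c * (-(2 * Y ω) / y + 3 * (Y ω)^2 / y^2 - (Y ω)^4 / y^4) := by
    intro ω
    have hyne : y ≠ 0 := ne_of_gt hy
    set t : ℝ := Y ω / y with htdef
    have h2 : -(2 * Y ω) / y = -(2 * t) := by rw [htdef]; ring
    have h3 : 3 * (Y ω)^2 / y^2 = 3 * t^2 := by rw [htdef]; ring
    have h4 : (Y ω)^4 / y^4 = t^4 := by rw [htdef]; ring
    have hiff : (0 ≤ Y ω) ↔ (0 ≤ t) := by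
      rw [htdef]
      constructor
      · intro h; exact div_nonneg h hy.le
      · intro h; by_contra hneg; push_neg at hneg
        exact absurd (div_neg_of_neg_of_pos hneg hy) (not_lt.mpr h)
    rw [h2, h3, h4]
    have := hzz_key t
    by_cases h : 0 ≤ Y ω
    · rw [Set.indicator_of_mem (show ω ∈ {ω | 0 ≤ Y ω} from h), hc]
      rw [if_pos (hiff.mp h)] at this
      exact this
    · rw [Set.indicator_of_notMem (show ω ∉ {ω | 0 ≤ Y ω} from h), hc]
      rw [if_neg (fun h' => h (hiff.mpr h'))] at this
      exact this
  have hintY : ∫ ω, -(2 * Y ω) / y ∂μ = -(2 * (∫ ω, Y ω ∂μ)) / y := by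
    rw [integral_div, integral_neg, integral_const_mul]
  have hint2 : ∫ ω, 3 * (Y ω)^2 / y^2 ∂μ = 3 * (∫ ω, (Y ω)^2 ∂μ) / y^2 := by
    rw [integral_div, integral_const_mul]
  have hint4 : ∫ ω, (Y ω)^4 / y^4 ∂μ = (∫ ω, (Y ω)^4 ∂μ) / y^4 := integral_div _ _
  have hab : Integrable (fun ω => -(2 * Y ω) / y + 3 * (Y ω)^2 / y^2) μ := ha.add hb
  have hsum : ∫ ω, (-(2 * Y ω) / y + 3 * (Y ω)^2 / y^2 - (Y ω)^4 / y^4) ∂μ =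
      -(2 * (∫ ω, Y ω ∂μ)) / y + 3 * (∫ ω, (Y ω)^2 ∂μ) / y^2 - (∫ ω, (Y ω)^4 ∂μ) / y^4 := by
    rw [integral_sub hab hd, integral_add ha hb, hintY, hint2, hint4]
  calc (μ {ω | 0 ≤ Y ω}).toReal
      = ∫ ω, Set.indicator {ω | 0 ≤ Y ω} (fun _ => (1:ℝ)) ω ∂μ :=
        (integral_indicator_one hs).symm
    _ ≤ ∫ ω, (1 - c * (-(2 * Y ω) / y + 3 * (Y ω)^2 / y^2 - (Y ω)^4 / y^4)) ∂μ :=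
        integral_mono ((integrable_const 1).indicator hs) hF pointwise
    _ = 1 - c * (-(2 * (∫ ω, Y ω ∂μ)) / y + 3 * (∫ ω, (Y ω)^2 ∂μ) / y^2
          - (∫ ω, (Y ω)^4 ∂μ) / y^4) := by
        rw [integral_sub (integrable_const 1) (hg.const_mul c), integral_const_mul, hsum]
        simp
end

section
/- Let X be a real-valued random variable on a probability space with E[X⁴] < ∞, satisfying E[X] = 0, E[X²] = 1, and E[X⁴] ≤ 2. Then P(X > 0) ≥ β, where β = √3 − 3/2. -/
open MeasureTheory

lemma quartic_bound_neg (s x : ℝ) (hs2 : s^2 = 3) (hs0 : 0 < s) (hx : x ≤ 0) :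
    (8 - 4*s)/3 * x + (2*s - 3) * x^2 - (2*s - 3)/4 * x^4 ≤ 0 := by
  have hc : 0 < (2*s - 3)/4 := by nlinarith
  have key : 0 ≤ (-x) * (-x - 2*s/3)^2 * (-x + 4*s/3) := by
    apply mul_nonneg (mul_nonneg (by linarith) (sq_nonneg _))
    nlinarith
  have id : (8 - 4*s)/3 * x + (2*s - 3) * x^2 - (2*s - 3)/4 * x^4
      = -((2*s - 3)/4 * ((-x) * (-x - 2*s/3)^2 * (-x + 4*s/3))) := by
    linear_combination (-8/27*s^2*x - 2/3*s*x^2 + 4/9*s*x + x^2 - 8/9*x) * hs2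
  rw [id]
  have := mul_nonneg hc.le key
  linarith

lemma quartic_bound_pos (s x : ℝ) (hs2 : s^2 = 3) (hs1 : 1 ≤ s) :
    (8 - 4*s)/3 * x + (2*s - 3) * x^2 - (2*s - 3)/4 * x^4 ≤ 1 := by
  have hc : 0 < (2*s - 3)/4 := by nlinarith
  have quad : 0 ≤ (x + (1 + s/3))^2 + (4*s - 4)/3 :=
    add_nonneg (sq_nonneg _) (by linarith)
  have key : 0 ≤ (2*s - 3)/4 * ((x - (1 + s/3))^2 * ((x + (1 + s/3))^2 + (4*s - 4)/3)) :=
    mul_nonneg hc.le (mul_nonneg (sq_nonneg _) quad)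
  have id : 1 - ((8 - 4*s)/3 * x + (2*s - 3) * x^2 - (2*s - 3)/4 * x^4)
      = (2*s - 3)/4 * ((x - (1 + s/3))^2 * ((x + (1 + s/3))^2 + (4*s - 4)/3)) := by
    linear_combination (-1/162*s^3 - 5/36*s^2 + 1/9*s*x^2 + 4/9*s*x - 1/2*s - 1/6*x^2
      + 2/9*x - 1/4) * hs2
  linarith [key, id.ge, id.le]

/-- If `X` is a real random variable with `E[X] = 0`, `E[X²] = 1` and `E[X⁴] ≤ 2`, then
`P(X > 0) ≥ β` where `β = √3 - 3/2`. -/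
theorem anticoncentration_fourth_moment {Ω : Type*} [MeasurableSpace Ω] (μ : Measure Ω)
    [IsProbabilityMeasure μ]
    (X : Ω → ℝ) (hX : Measurable X) (hX4 : Integrable (fun ω => (X ω) ^ 4) μ)
    (h1 : (∫ ω, X ω ∂μ) = 0) (h2 : (∫ ω, (X ω) ^ 2 ∂μ) = 1)
    (h4 : (∫ ω, (X ω) ^ 4 ∂μ) ≤ 2) :
    Real.sqrt 3 - 3 / 2 ≤ (μ {ω | 0 < X ω}).toReal := by
  set s : ℝ := Real.sqrt 3 with hsdef
  have hs2 : s^2 = 3 := Real.sq_sqrt (by norm_num)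
  have hs0' : 0 ≤ s := Real.sqrt_nonneg 3
  have hs0 : 0 < s := by nlinarith
  have hs1 : 1 ≤ s := by nlinarith
  have hc : 0 < (2*s - 3)/4 := by nlinarith
  have hmeas : MeasurableSet {ω | 0 < X ω} := measurableSet_lt measurable_const hX
  -- integrability
  have hdom : Integrable (fun ω => X ω ^ 4 + 1) μ := hX4.add (integrable_const 1)
  have hX1 : Integrable X μ := by
    refine hdom.mono' hX.aestronglyMeasurable (ae_of_all _ fun ω => ?_)
    have h2' : (X ω)^4 = |X ω|^4 := by rw [← abs_pow, abs_of_nonneg (by positivity)]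
    rw [Real.norm_eq_abs]
    nlinarith [sq_nonneg (|X ω|^2 - 1), sq_nonneg (|X ω| - 1), abs_nonneg (X ω)]
  have hX2 : Integrable (fun ω => X ω ^ 2) μ := by
    refine hdom.mono' (hX.pow_const 2).aestronglyMeasurable (ae_of_all _ fun ω => ?_)
    rw [Real.norm_eq_abs, abs_of_nonneg (by positivity)]
    nlinarith [sq_nonneg (X ω ^ 2 - 1)]
  have hIa : Integrable (fun ω => (8 - 4*s)/3 * X ω) μ := hX1.const_mul _
  have hIb : Integrable (fun ω => (2*s - 3) * X ω ^ 2) μ := hX2.const_mul _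
  have hIc : Integrable (fun ω => (2*s - 3)/4 * X ω ^ 4) μ := hX4.const_mul _
  have hIab : Integrable (fun ω => (8 - 4*s)/3 * X ω + (2*s - 3) * X ω ^ 2) μ := hIa.add hIb
  have hind : Integrable ({ω | 0 < X ω}.indicator (fun _ => (1:ℝ))) μ :=
    (integrable_const (1:ℝ)).indicator hmeas
  -- pointwise bound
  have hle : ∀ ω, (8 - 4*s)/3 * X ω + (2*s - 3) * X ω^2 - (2*s - 3)/4 * X ω^4
      ≤ {ω | 0 < X ω}.indicator (fun _ => (1:ℝ)) ω := by
    intro ω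
    by_cases h : 0 < X ω
    · have hm : ω ∈ {ω | 0 < X ω} := h
      rw [Set.indicator_of_mem hm]
      exact quartic_bound_pos s (X ω) hs2 hs1
    · have hm : ω ∉ {ω | 0 < X ω} := h
      rw [Set.indicator_of_notMem hm]
      exact quartic_bound_neg s (X ω) hs2 hs0 (le_of_not_gt h)
  have hintle : ∫ ω, ((8 - 4*s)/3 * X ω + (2*s - 3) * X ω^2 - (2*s - 3)/4 * X ω^4) ∂μ
      ≤ ∫ ω, {ω | 0 < X ω}.indicator (fun _ => (1:ℝ)) ω ∂μ :=
    integral_mono (hIab.sub hIc) hind hle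
  have hR : ∫ ω, {ω | 0 < X ω}.indicator (fun _ => (1:ℝ)) ω ∂μ = (μ {ω | 0 < X ω}).toReal := by
    exact integral_indicator_one (μ := μ) hmeas
  have hL : ∫ ω, ((8 - 4*s)/3 * X ω + (2*s - 3) * X ω^2 - (2*s - 3)/4 * X ω^4) ∂μ
      = (2*s - 3) - (2*s - 3)/4 * ∫ ω, X ω ^ 4 ∂μ := by
    rw [integral_sub hIab hIc, integral_add hIa hIb, integral_const_mul, integral_const_mul,
      integral_const_mul, h1, h2]
    ring
  rw [hR, hL] at hintle
  nlinarith [mul_le_mul_of_nonneg_left h4 hc.le]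
end

section
/- Let X be a real-valued random variable on a probability space with E[X⁴] < ∞, satisfying E[X] = 0, E[X²] = 1, E[X³] = 0, and E[X⁴] ≤ 2. Then P(X > 0) ≥ 1/4. -/
open MeasureTheory

lemma pow_le_one_add_pow4 (x : ℝ) :
    |x| ≤ 1 + x ^ 4 ∧ x ^ 2 ≤ 1 + x ^ 4 ∧ |x ^ 3| ≤ 1 + x ^ 4 := by
  have ha : 0 ≤ |x| := abs_nonneg x
  have h4 : |x| ^ 4 = x ^ 4 := by
    rw [← abs_pow, abs_of_nonneg (by positivity)]
  refine ⟨?_, ?_, ?_⟩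
  · nlinarith [sq_nonneg (|x| ^ 2 - 1), sq_nonneg (|x| - 1), sq_nonneg (|x| + 1)]
  · nlinarith [sq_nonneg (x ^ 2 - 1)]
  · have : |x ^ 3| = |x| ^ 3 := by rw [← abs_pow]
    rw [this]
    nlinarith [sq_nonneg (|x| ^ 2 - |x|), sq_nonneg (|x| - 1), sq_nonneg |x|]

lemma key_pointwise (x : ℝ) :
    -x ^ 4 - (Real.sqrt 2 / 2) * x ^ 3 + 4 * x ^ 2 + 3 * Real.sqrt 2 * x
      ≤ Set.indicator {y : ℝ | 0 < y} (fun _ => (8 : ℝ)) x := by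
  have hs : Real.sqrt 2 ^ 2 = 2 := Real.sq_sqrt (by norm_num)
  have hs0 : 0 ≤ Real.sqrt 2 := Real.sqrt_nonneg 2
  by_cases hx : 0 < x
  · have hmem : x ∈ {y : ℝ | 0 < y} := hx
    rw [Set.indicator_of_mem hmem]
    nlinarith [mul_nonneg (sq_nonneg (x - Real.sqrt 2)) (sq_nonneg (x + 5 * Real.sqrt 2 / 4)),
      sq_nonneg (x - Real.sqrt 2)]
  · have hmem : x ∉ {y : ℝ | 0 < y} := hx
    rw [Set.indicator_of_notMem hmem]
    push_neg at hx
    nlinarith [sq_nonneg (x + Real.sqrt 2), mul_nonneg (mul_nonneg (neg_nonneg.2 hx)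
      (sq_nonneg (x + Real.sqrt 2))) (by nlinarith : (0:ℝ) ≤ 3 * Real.sqrt 2 / 2 - x)]

/-- If `X` is a real random variable with `E[X] = 0`, `E[X²] = 1`, `E[X³] = 0` and
`E[X⁴] ≤ 2`, then `P(X > 0) ≥ 1/4`. -/
theorem anticoncentration_fourth_moment_symmetric {Ω : Type*} [MeasurableSpace Ω]
    (μ : Measure Ω) [IsProbabilityMeasure μ]
    (X : Ω → ℝ) (hX : Measurable X) (hX4 : Integrable (fun ω => (X ω) ^ 4) μ)
    (h1 : (∫ ω, X ω ∂μ) = 0) (h2 : (∫ ω, (X ω) ^ 2 ∂μ) = 1)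
    (h3 : (∫ ω, (X ω) ^ 3 ∂μ) = 0) (h4 : (∫ ω, (X ω) ^ 4 ∂μ) ≤ 2) :
    1 / 4 ≤ (μ {ω | 0 < X ω}).toReal := by
  have hbound : Integrable (fun ω => 1 + (X ω) ^ 4) μ := (integrable_const 1).add hX4
  have hI1 : Integrable (fun ω => X ω) μ := by
    refine hbound.mono' hX.aestronglyMeasurable (Filter.Eventually.of_forall fun ω => ?_)
    simpa [Real.norm_eq_abs] using (pow_le_one_add_pow4 (X ω)).1
  have hI2 : Integrable (fun ω => (X ω) ^ 2) μ := by
    refine hbound.mono' (hX.pow_const 2).aestronglyMeasurable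
      (Filter.Eventually.of_forall fun ω => ?_)
    have := (pow_le_one_add_pow4 (X ω)).2.1
    simp only [Real.norm_eq_abs]
    rwa [abs_of_nonneg (by positivity)]
  have hI3 : Integrable (fun ω => (X ω) ^ 3) μ := by
    refine hbound.mono' (hX.pow_const 3).aestronglyMeasurable
      (Filter.Eventually.of_forall fun ω => ?_)
    simpa [Real.norm_eq_abs] using (pow_le_one_add_pow4 (X ω)).2.2
  set s : Set Ω := {ω | 0 < X ω} with hsdef
  have hsm : MeasurableSet s := hX measurableSet_Ioi
  have hIf : Integrable (fun ω =>
      -(X ω) ^ 4 - (Real.sqrt 2 / 2) * (X ω) ^ 3 + 4 * (X ω) ^ 2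
        + 3 * Real.sqrt 2 * (X ω)) μ := by
    exact ((hX4.neg.sub (hI3.const_mul _)).add (hI2.const_mul 4)).add (hI1.const_mul _)
  have hIg : Integrable (s.indicator fun _ => (8 : ℝ)) μ :=
    (integrable_const (8 : ℝ)).indicator hsm
  have hle : ∫ ω, (-(X ω) ^ 4 - (Real.sqrt 2 / 2) * (X ω) ^ 3 + 4 * (X ω) ^ 2
        + 3 * Real.sqrt 2 * (X ω)) ∂μ ≤ ∫ ω, s.indicator (fun _ => (8 : ℝ)) ω ∂μ := by
    refine integral_mono hIf hIg fun ω => ?_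
    have h := key_pointwise (X ω)
    have heq : s.indicator (fun _ => (8 : ℝ)) ω
        = Set.indicator {y : ℝ | 0 < y} (fun _ => (8 : ℝ)) (X ω) := by
      by_cases hω : ω ∈ s
      · rw [Set.indicator_of_mem hω,
          Set.indicator_of_mem (show X ω ∈ {y : ℝ | 0 < y} from hω)]
      · rw [Set.indicator_of_notMem hω,
          Set.indicator_of_notMem (show X ω ∉ {y : ℝ | 0 < y} from hω)]
    rw [heq]
    exact h
  have hL : ∫ ω, (-(X ω) ^ 4 - (Real.sqrt 2 / 2) * (X ω) ^ 3 + 4 * (X ω) ^ 2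
        + 3 * Real.sqrt 2 * (X ω)) ∂μ
      = -(∫ ω, (X ω) ^ 4 ∂μ) - (Real.sqrt 2 / 2) * (∫ ω, (X ω) ^ 3 ∂μ)
        + 4 * (∫ ω, (X ω) ^ 2 ∂μ) + 3 * Real.sqrt 2 * (∫ ω, X ω ∂μ) := by
    have hneg : Integrable (fun ω => -(X ω) ^ 4) μ := hX4.neg
    have h3' : Integrable (fun ω => (Real.sqrt 2 / 2) * (X ω) ^ 3) μ := hI3.const_mul _
    have h2' : Integrable (fun ω => 4 * (X ω) ^ 2) μ := hI2.const_mul 4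
    have h1' : Integrable (fun ω => 3 * Real.sqrt 2 * X ω) μ := hI1.const_mul _
    have hIa : Integrable (fun ω => -(X ω) ^ 4 - (Real.sqrt 2 / 2) * (X ω) ^ 3) μ :=
      hneg.sub h3'
    have hIb : Integrable (fun ω => -(X ω) ^ 4 - (Real.sqrt 2 / 2) * (X ω) ^ 3
        + 4 * (X ω) ^ 2) μ := hIa.add h2'
    rw [integral_add hIb h1', integral_add hIa h2', integral_sub hneg h3', integral_neg,
      integral_const_mul, integral_const_mul, integral_const_mul]
  have hR : ∫ ω, s.indicator (fun _ => (8 : ℝ)) ω ∂μ = 8 * (μ s).toReal := by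
    rw [integral_indicator hsm, integral_const]
    simp [mul_comm]
    rfl
  rw [hL, hR, h1, h2, h3] at hle
  have h2' : 2 ≤ 8 * (μ s).toReal := by linarith
  linarith
end

section
/- Let M be a symmetric n×n real matrix with non-negative entries. Suppose that for all non-empty subsets S, T ⊆ {1,…,n} such that M_{st} = 0 for every s ∈ S and t ∈ T, one has |S| + |T| < n. Then there exists a diagonal matrix D with strictly positive diagonal entries such that DMD is doubly stochastic. -/
open Matrix Finset

/-- A square real matrix is doubly stochastic if its entries are non-negative and all of its
row sums and column sums equal `1`. -/
def IsDoublyStochastic {n : ℕ} (B : Matrix (Fin n) (Fin n) ℝ) : Prop :=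
  (∀ i j, 0 ≤ B i j) ∧ (∀ i, ∑ j, B i j = 1) ∧ (∀ j, ∑ i, B i j = 1)


lemma sorted_max_bound {n : ℕ} (hn : 0 < n) (v : Fin n → ℝ)
    (hsum : 0 ≤ ∑ i, v i)
    (hST : ∀ S T : Finset (Fin n), S.Nonempty → T.Nonempty →
      (∀ s ∈ S, ∀ t ∈ T, 1 < v s + v t) → S.card + T.card < n) :
    ∀ i, v i ≤ n := by
  have pair_bound : ∀ a b : Fin n,
      (n : ℕ) ≤ (univ.filter fun j => v a ≤ v j).card + (univ.filter fun j => v b ≤ v j).card →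
      v a + v b ≤ 1 := by
    intro a b hcard
    by_contra h
    push_neg at h
    have := hST (univ.filter fun j => v a ≤ v j) (univ.filter fun j => v b ≤ v j)
      ⟨a, by simp⟩ ⟨b, by simp⟩ ?_
    · omega
    · intro s hs t ht
      simp only [mem_filter] at hs ht
      linarith [hs.2, ht.2]
  set σ := Tuple.sort v with hσ
  set w : Fin n → ℝ := v ∘ σ with hw
  have hmono : Monotone w := Tuple.monotone_sort v
  have rank : ∀ k : Fin n, (n - (k : ℕ)) ≤ (univ.filter fun j => v (σ k) ≤ v j).card := by
    intro k
    have : (Finset.Ici k).card ≤ (univ.filter fun j => v (σ k) ≤ v j).card := by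
      apply Finset.card_le_card_of_injOn σ
      · intro l hl
        simp only [Finset.coe_Ici, Set.mem_Ici, Finset.mem_Ici, Finset.mem_coe] at hl
        simp only [Finset.coe_filter, Set.mem_setOf_eq, Finset.mem_coe, mem_filter, mem_univ, true_and]
        exact hmono hl
      · exact fun a _ b _ hab => σ.injective hab
    rwa [Fin.card_Ici] at this
  have hpair : ∀ k l : Fin n, (k : ℕ) + (l : ℕ) ≤ n → w k + w l ≤ 1 := by
    intro k l hkl
    apply pair_bound (σ k) (σ l)
    have h1 := rank k
    have h2 := rank l
    have hk := k.isLt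
    have hl := l.isLt
    omega
  set W : ℕ → ℝ := fun k => if h : k < n then w ⟨k, h⟩ else 0 with hW
  have hWval : ∀ k : Fin n, W (k : ℕ) = w k := by
    intro k; simp [hW, k.isLt]
  have hsum' : 0 ≤ ∑ k ∈ range n, W k := by
    rw [← Fin.sum_univ_eq_sum_range]
    have : ∑ i : Fin n, W (i : ℕ) = ∑ i : Fin n, v i := by
      simp only [hWval]
      exact Equiv.sum_comp σ v
    rw [this]; exact hsum
  have hrefl : ∑ k ∈ Finset.Ico 1 n, W (n - k) = ∑ k ∈ Finset.Ico 1 n, W k := by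
    apply Finset.sum_nbij' (i := fun k => n - k) (j := fun k => n - k)
    · intro a ha; simp only [Finset.mem_Ico] at *; omega
    · intro a ha; simp only [Finset.mem_Ico] at *; omega
    · intro a ha; simp only [Finset.mem_Ico] at ha; omega
    · intro a ha; simp only [Finset.mem_Ico] at ha; omega
    · intro a ha; rfl
  have htail : ∑ k ∈ Finset.Ico 1 n, W k ≤ ((n : ℝ) - 1) / 2 := by
    have h2 : (2 : ℝ) * ∑ k ∈ Finset.Ico 1 n, W k
        = ∑ k ∈ Finset.Ico 1 n, (W k + W (n - k)) := by
      rw [Finset.sum_add_distrib, hrefl]; ring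
    have hle : ∑ k ∈ Finset.Ico 1 n, (W k + W (n - k)) ≤ ∑ _k ∈ Finset.Ico 1 n, (1 : ℝ) := by
      apply Finset.sum_le_sum
      intro k hk
      simp only [Finset.mem_Ico] at hk
      have hk1 : k < n := hk.2
      have hk2 : n - k < n := by omega
      have := hpair ⟨k, hk1⟩ ⟨n - k, hk2⟩ (by show k + (n - k) ≤ n; omega)
      rw [hW]
      simp only [dif_pos hk1, dif_pos hk2]
      exact this
    have hcard : ∑ _k ∈ Finset.Ico 1 n, (1 : ℝ) = ((n - 1 : ℕ) : ℝ) := by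
      simp [Nat.card_Ico]
    have hcast : ((n - 1 : ℕ) : ℝ) ≤ (n : ℝ) - 1 := by
      rw [Nat.cast_sub hn]; simp
    linarith
  have hsplit : ∑ k ∈ range n, W k = W 0 + ∑ k ∈ Finset.Ico 1 n, W k := by
    rw [Finset.range_eq_Ico, Finset.sum_eq_sum_Ico_succ_bot hn]
  have hW0 : -((n : ℝ) - 1) / 2 ≤ W 0 := by
    rw [hsplit] at hsum'; linarith
  intro i
  have hlast : n - 1 < n := by omega
  have hvi : v i ≤ w ⟨n - 1, hlast⟩ := by
    have hh : v i = w (σ.symm i) := by simp [hw]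
    rw [hh]
    apply hmono
    have := (σ.symm i).isLt
    exact Fin.le_def.mpr (by simp; omega)
  have h0n : w ⟨0, hn⟩ + w ⟨n - 1, hlast⟩ ≤ 1 :=
    hpair ⟨0, hn⟩ ⟨n - 1, hlast⟩ (by show 0 + (n - 1) ≤ n; omega)
  have hW0' : W 0 = w ⟨0, hn⟩ := by simp [hW, hn]
  rw [hW0'] at hW0
  have hn1 : (1 : ℝ) ≤ n := by exact_mod_cast hn
  linarith


lemma first_order_eq {n : ℕ} (M : Matrix (Fin n) (Fin n) ℝ) (hsymm : M.IsSymm)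
    (x : Fin n → ℝ) (hx : ∀ k, 0 < x k) (hprod : 1 ≤ ∏ k, x k)
    (hmin : ∀ y : Fin n → ℝ, (∀ k, 0 < y k) → 1 ≤ ∏ k, y k →
      x ⬝ᵥ M *ᵥ x ≤ y ⬝ᵥ M *ᵥ y)
    (i j : Fin n) :
    x i * (M *ᵥ x) i = x j * (M *ᵥ x) j := by
  rcases eq_or_ne i j with rfl | hij
  · rfl
  have bsym : ∀ z u : Fin n → ℝ, z ⬝ᵥ M *ᵥ u = u ⬝ᵥ M *ᵥ z := by
    intro z u
    simp only [dotProduct, mulVec, Finset.mul_sum]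
    rw [Finset.sum_comm]
    refine Finset.sum_congr rfl fun l _ => Finset.sum_congr rfl fun k _ => ?_
    rw [show M l k = M k l from hsymm.apply k l]
    ring
  set u : Fin n → ℝ := Pi.single i (x i) with hu
  set w : Fin n → ℝ := Pi.single j (x j) with hwdef
  set α := x i * (M *ᵥ x) i with hα
  set β := x j * (M *ᵥ x) j with hβ
  set A := x i * (M i i * x i) with hA
  set Bq := x j * (M j j * x j) with hBq
  set Γ := x i * (M i j * x j) with hΓ
  have h1 : u ⬝ᵥ M *ᵥ x = α := single_dotProduct _ _ _
  have h2 : w ⬝ᵥ M *ᵥ x = β := single_dotProduct _ _ _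
  have h3 : u ⬝ᵥ M *ᵥ u = A := by
    rw [hu, Matrix.mulVec_single, single_dotProduct]
    simp only [hA, Pi.smul_apply, op_smul_eq_mul, Matrix.col_apply, smul_eq_mul]
  have h4 : w ⬝ᵥ M *ᵥ w = Bq := by
    rw [hwdef, Matrix.mulVec_single, single_dotProduct]
    simp only [hBq, Pi.smul_apply, op_smul_eq_mul, Matrix.col_apply, smul_eq_mul]
  have h5 : u ⬝ᵥ M *ᵥ w = Γ := by
    rw [hu, hwdef, Matrix.mulVec_single, single_dotProduct]
    simp only [hΓ, Pi.smul_apply, op_smul_eq_mul, Matrix.col_apply, smul_eq_mul]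
  have h6 : w ⬝ᵥ M *ᵥ u = Γ := by rw [bsym, h5]
  have h7 : x ⬝ᵥ M *ᵥ u = α := by rw [bsym, h1]
  have h8 : x ⬝ᵥ M *ᵥ w = β := by rw [bsym, h2]
  have expand : ∀ s r : ℝ, (x + s • u + r • w) ⬝ᵥ M *ᵥ (x + s • u + r • w)
      = x ⬝ᵥ M *ᵥ x + 2*s*α + 2*r*β + s^2*A + r^2*Bq + 2*s*r*Γ := by
    intro s r
    simp only [add_dotProduct, dotProduct_add, Matrix.mulVec_add, Matrix.mulVec_smul,
      smul_dotProduct, dotProduct_smul, smul_eq_mul, h1, h2, h3, h4, h5, h6, h7, h8]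
    ring
  set y : ℝ → (Fin n → ℝ) :=
    fun t => Function.update (Function.update x i (t * x i)) j (x j / t) with hy
  have hyvec : ∀ t : ℝ, t ≠ 0 → y t = x + (t - 1) • u + (t⁻¹ - 1) • w := by
    intro t ht
    funext k
    simp only [hy, Pi.add_apply, Pi.smul_apply, smul_eq_mul, Function.update_apply, hu, hwdef,
      Pi.single_apply]
    rcases eq_or_ne k j with rfl | hkj
    · simp [hij.symm]
      field_simp
      ring
    · rcases eq_or_ne k i with rfl | hki
      · simp [hkj, hij]
        ring
      · simp [hkj, hki]
  set G : ℝ → ℝ := fun t => x ⬝ᵥ M *ᵥ x + 2*(t-1)*α + 2*(t⁻¹-1)*β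
      + (t-1)^2*A + (t⁻¹-1)^2*Bq + 2*(t-1)*(t⁻¹-1)*Γ with hG
  have hG1 : G 1 = x ⬝ᵥ M *ᵥ x := by simp [hG]
  have hGt : ∀ t : ℝ, t ≠ 0 → G t = (y t) ⬝ᵥ M *ᵥ (y t) := by
    intro t ht
    rw [hyvec t ht, expand]
  have hlower : ∀ t ∈ Set.Ioi (0:ℝ), G 1 ≤ G t := by
    intro t ht
    have ht0 : t ≠ 0 := ne_of_gt ht
    rw [hG1, hGt t ht0]
    have htp : (0:ℝ) < t := Set.mem_Ioi.mp ht
    apply hmin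
    · intro k
      simp only [hy, Function.update_apply]
      rcases eq_or_ne k j with rfl | hkj
      · simp only [if_pos rfl]; exact div_pos (hx _) htp
      · rcases eq_or_ne k i with rfl | hki
        · simp only [if_neg hkj, if_pos rfl]; exact mul_pos htp (hx _)
        · simp only [if_neg hkj, if_neg hki]; exact hx k
    · have hprodeq : ∏ k, y t k = ∏ k, x k := by
        rw [hy]
        rw [Finset.prod_update_of_mem (Finset.mem_univ j),
          Finset.sdiff_singleton_eq_erase j univ,
          Finset.prod_update_of_mem (Finset.mem_erase.mpr ⟨hij, Finset.mem_univ i⟩),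
          Finset.sdiff_singleton_eq_erase i _]
        have e1 : ∏ k, x k = x j * ∏ k ∈ univ.erase j, x k :=
          (Finset.mul_prod_erase univ x (Finset.mem_univ j)).symm
        have e2 : ∏ k ∈ univ.erase j, x k = x i * ∏ k ∈ (univ.erase j).erase i, x k :=
          (Finset.mul_prod_erase _ x (Finset.mem_erase.mpr ⟨hij, Finset.mem_univ i⟩)).symm
        have hx0 : ∏ k, x k = x j * (x i * ∏ k ∈ (univ.erase j).erase i, x k) := by
          rw [e1, e2]
        rw [hx0]
        field_simp
      rw [hprodeq]; exact hprod
  have hloc : IsLocalMin G 1 := by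
    have hmem : Set.Ioi (0:ℝ) ∈ nhds (1:ℝ) := isOpen_Ioi.mem_nhds (by norm_num)
    exact Filter.eventually_of_mem hmem hlower
  have hid : HasDerivAt (fun t : ℝ => t - 1) 1 1 := (hasDerivAt_id 1).sub_const 1
  have hinv0 : HasDerivAt (fun t : ℝ => t⁻¹ - 1) (-1) 1 := by
    have := (hasDerivAt_inv (one_ne_zero : (1:ℝ) ≠ 0)).sub_const 1
    simpa using this
  have hT1 : HasDerivAt (fun t : ℝ => 2*(t-1)*α) (2*1*α) 1 := (hid.const_mul 2).mul_const α
  have hT2 : HasDerivAt (fun t : ℝ => 2*(t⁻¹-1)*β) (2*(-1)*β) 1 := (hinv0.const_mul 2).mul_const β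
  have hT3 : HasDerivAt (fun t : ℝ => (t-1)^2*A) ((2*(1-1)^1*1)*A) 1 := (hid.pow 2).mul_const A
  have hT4 : HasDerivAt (fun t : ℝ => (t⁻¹-1)^2*Bq) ((2*((1:ℝ)⁻¹-1)^1*(-1))*Bq) 1 :=
    (hinv0.pow 2).mul_const Bq
  have hT5 : HasDerivAt (fun t : ℝ => 2*(t-1)*(t⁻¹-1)*Γ)
      ((2*1*((1:ℝ)⁻¹-1) + 2*((1:ℝ)-1)*(-1))*Γ) 1 := ((hid.const_mul 2).mul hinv0).mul_const Γ
  have hder : HasDerivAt G (2*α - 2*β) 1 := by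
    have h := ((((((hasDerivAt_const (1:ℝ) (x ⬝ᵥ M *ᵥ x)).add hT1).add hT2).add hT3).add
      hT4).add hT5)
    convert h using 1
    · rfl
    · ext t; rfl
    · ext t; rfl
    ring
  have hzero : deriv G 1 = 0 := hloc.deriv_eq_zero
  rw [hder.deriv] at hzero
  show α = β
  linarith

/-- If `M` is a symmetric matrix with non-negative entries such that every pair of non-empty
sets `S, T` of indices with `M[S, T] = 0` satisfies `|S| + |T| < n`, then `M` can be
scaled by a positive diagonal matrix `D` so that `D M D` is doubly stochastic. -/
theorem scaling_of_no_large_zero_block (n : ℕ) (M : Matrix (Fin n) (Fin n) ℝ)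
    (hsymm : M.IsSymm) (hpos : ∀ i j, 0 ≤ M i j)
    (hblock : ∀ S T : Finset (Fin n), S.Nonempty → T.Nonempty →
      (∀ s ∈ S, ∀ t ∈ T, M s t = 0) → S.card + T.card < n) :
    ∃ d : Fin n → ℝ, (∀ i, 0 < d i) ∧
      IsDoublyStochastic (diagonal d * M * diagonal d) := by
  rcases Nat.eq_zero_or_pos n with rfl | hn
  · exact ⟨fun _ => 1, fun i => i.elim0, fun i => i.elim0, fun i => i.elim0, fun j => j.elim0⟩
  set Q : (Fin n → ℝ) → ℝ := fun z => z ⬝ᵥ M *ᵥ z with hQ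
  have hmv : ∀ (z : Fin n → ℝ) (i : Fin n), (M *ᵥ z) i = ∑ l, M i l * z l := fun z i => rfl
  have hQsum : ∀ z, Q z = ∑ k, ∑ l, M k l * (z k * z l) := by
    intro z
    simp only [hQ, dotProduct, mulVec, Finset.mul_sum]
    exact Finset.sum_congr rfl fun k _ => Finset.sum_congr rfl fun l _ => by ring
  have hQcont : Continuous Q := by
    have he : Q = fun z : Fin n → ℝ => ∑ k, z k * ∑ l, M k l * z l := rfl
    rw [he]
    exact continuous_finset_sum _ fun k _ => (continuous_apply k).mul
      (continuous_finset_sum _ fun l _ => continuous_const.mul (continuous_apply l))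
  set c : ℝ := Q (fun _ => 1) with hc
  have hc' : c = ∑ k, ∑ l, M k l := by rw [hc, hQsum]; simp
  have hc0 : 0 ≤ c := by
    rw [hc']
    exact Finset.sum_nonneg fun k _ => Finset.sum_nonneg fun l _ => hpos k l
  set Sg0 : ℝ := ∑ k, ∑ l, if 0 < M k l then (M k l)⁻¹ else 0 with hSg
  have hSgentry : ∀ k l : Fin n, 0 ≤ if 0 < M k l then (M k l)⁻¹ else 0 := by
    intro k l
    split
    · positivity
    · exact le_refl _
  have hSg0 : 0 ≤ Sg0 :=
    Finset.sum_nonneg fun k _ => Finset.sum_nonneg fun l _ => hSgentry k l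
  set K : ℝ := max 2 (c * Sg0) with hK
  have hK1 : (1:ℝ) < K := lt_of_lt_of_le one_lt_two (le_max_left _ _)
  have hK0 : (0:ℝ) < K := by linarith
  -- edge bound
  have hedge : ∀ z : Fin n → ℝ, (∀ k, 0 ≤ z k) → Q z ≤ c →
      ∀ i j, 0 < M i j → z i * z j ≤ K := by
    intro z hz hQz i j hMij
    have hterm : M i j * (z i * z j) ≤ Q z := by
      rw [hQsum]
      have hinner : M i j * (z i * z j) ≤ ∑ l, M i l * (z i * z l) :=
        Finset.single_le_sum (f := fun l => M i l * (z i * z l))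
          (fun l _ => mul_nonneg (hpos i l) (mul_nonneg (hz i) (hz l))) (Finset.mem_univ j)
      refine le_trans hinner ?_
      exact Finset.single_le_sum (f := fun k => ∑ l, M k l * (z k * z l))
        (fun k _ => Finset.sum_nonneg fun l _ =>
          mul_nonneg (hpos k l) (mul_nonneg (hz k) (hz l))) (Finset.mem_univ i)
    have h1 : z i * z j ≤ c * (M i j)⁻¹ := by
      rw [← div_eq_mul_inv, le_div_iff₀ hMij]
      calc z i * z j * M i j = M i j * (z i * z j) := by ring
        _ ≤ Q z := hterm
        _ ≤ c := hQz
    have h2 : (M i j)⁻¹ ≤ Sg0 := by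
      have hval : (M i j)⁻¹ = if 0 < M i j then (M i j)⁻¹ else 0 := (if_pos hMij).symm
      rw [hval, hSg]
      have hin : (if 0 < M i j then (M i j)⁻¹ else 0)
          ≤ ∑ l, if 0 < M i l then (M i l)⁻¹ else 0 :=
        Finset.single_le_sum (fun l _ => hSgentry i l) (Finset.mem_univ j)
      refine le_trans hin ?_
      exact Finset.single_le_sum
        (fun k _ => Finset.sum_nonneg fun l _ => hSgentry k l) (Finset.mem_univ i)
    calc z i * z j ≤ c * (M i j)⁻¹ := h1
      _ ≤ c * Sg0 := by
          apply mul_le_mul_of_nonneg_left h2 hc0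
      _ ≤ K := le_max_right _ _
  set B : ℝ := K ^ (n : ℝ) with hB
  set E : Set (Fin n → ℝ) := {z | (∀ k, 0 ≤ z k) ∧ 1 ≤ ∏ k, z k ∧ Q z ≤ c} with hE
  have hEpos : ∀ z ∈ E, ∀ k, 0 < z k := by
    intro z hz k
    rcases lt_or_eq_of_le (hz.1 k) with h | h
    · exact h
    · exfalso
      have hp0 : (∏ k, z k) = 0 := Finset.prod_eq_zero (Finset.mem_univ k) h.symm
      have h1 := hz.2.1
      rw [hp0] at h1
      linarith
  have hbound : ∀ z ∈ E, ∀ i, z i ≤ B := by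
    intro z hzE i
    have hzpos : ∀ k, 0 < z k := hEpos z hzE
    set v : Fin n → ℝ := fun k => Real.logb K (z k) with hv
    have hvsum : 0 ≤ ∑ k, v k := by
      have hlp : Real.log (∏ k, z k) = ∑ k, Real.log (z k) :=
        Real.log_prod (s := univ) (f := z) (fun k _ => ne_of_gt (hzpos k))
      have hsum : ∑ k, v k = Real.logb K (∏ k, z k) := by
        simp only [hv, Real.logb, ← Finset.sum_div, hlp]
      rw [hsum]
      exact Real.logb_nonneg hK1 hzE.2.1
    have hvST : ∀ S T : Finset (Fin n), S.Nonempty → T.Nonempty →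
        (∀ s ∈ S, ∀ t ∈ T, 1 < v s + v t) → S.card + T.card < n := by
      intro S T hS hT hpair
      apply hblock S T hS hT
      intro s hs t ht
      by_contra hne
      have hMst : 0 < M s t := lt_of_le_of_ne (hpos s t) (Ne.symm hne)
      have hzz : z s * z t ≤ K := hedge z (fun k => (hzpos k).le) hzE.2.2 s t hMst
      have : v s + v t ≤ 1 := by
        have hlog : v s + v t = Real.logb K (z s * z t) := by
          rw [hv]
          rw [Real.logb_mul (ne_of_gt (hzpos s)) (ne_of_gt (hzpos t))]
        rw [hlog]
        calc Real.logb K (z s * z t) ≤ Real.logb K K :=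
              Real.logb_le_logb_of_le hK1 (mul_pos (hzpos s) (hzpos t)) hzz
          _ = 1 := Real.logb_self_eq_one hK1
      linarith [hpair s hs t ht]
    have hvi : v i ≤ n := sorted_max_bound hn v hvsum hvST i
    have : z i = K ^ (v i) := (Real.rpow_logb hK0 (ne_of_gt hK1) (hzpos i)).symm
    rw [this, hB]
    exact Real.rpow_le_rpow_of_exponent_le hK1.le hvi
  have hEclosed : IsClosed E := by
    have h1 : IsClosed {z : Fin n → ℝ | ∀ k, 0 ≤ z k} := by
      have : {z : Fin n → ℝ | ∀ k, 0 ≤ z k} = ⋂ k, {z | 0 ≤ z k} := by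
        ext z; simp
      rw [this]
      exact isClosed_iInter fun k => isClosed_le continuous_const (continuous_apply k)
    have h2 : IsClosed {z : Fin n → ℝ | 1 ≤ ∏ k, z k} :=
      isClosed_le continuous_const (continuous_finset_prod _ fun k _ => continuous_apply k)
    have h3 : IsClosed {z : Fin n → ℝ | Q z ≤ c} :=
      isClosed_le hQcont continuous_const
    have : E = {z : Fin n → ℝ | ∀ k, 0 ≤ z k} ∩
        ({z | 1 ≤ ∏ k, z k} ∩ {z | Q z ≤ c}) := by
      ext z; simp [hE]
    rw [this]
    exact h1.inter (h2.inter h3)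
  have hEcpt : IsCompact E := by
    apply IsCompact.of_isClosed_subset (isCompact_Icc (a := (0 : Fin n → ℝ))
      (b := fun _ => B)) hEclosed
    intro z hz
    constructor
    · intro k; exact (hEpos z hz k).le
    · intro k; exact hbound z hz k
  have hone : (fun _ => (1:ℝ)) ∈ E := by
    refine ⟨fun k => zero_le_one, by simp, le_of_eq rfl⟩
  obtain ⟨x, hxE, hxmin⟩ := hEcpt.exists_isMinOn ⟨_, hone⟩ hQcont.continuousOn
  have hxpos : ∀ k, 0 < x k := hEpos x hxE
  have hxprod : 1 ≤ ∏ k, x k := hxE.2.1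
  have hmin' : ∀ y : Fin n → ℝ, (∀ k, 0 < y k) → 1 ≤ ∏ k, y k →
      x ⬝ᵥ M *ᵥ x ≤ y ⬝ᵥ M *ᵥ y := by
    intro y hy hpy
    rcases le_or_gt (Q y) c with h | h
    · exact isMinOn_iff.mp hxmin y ⟨fun k => (hy k).le, hpy, h⟩
    · have hxc : Q x ≤ c := isMinOn_iff.mp hxmin _ hone
      calc x ⬝ᵥ M *ᵥ x = Q x := rfl
        _ ≤ c := hxc
        _ ≤ Q y := h.le
  have key : ∀ i j : Fin n, x i * (M *ᵥ x) i = x j * (M *ᵥ x) j :=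
    first_order_eq M hsymm x hxpos hxprod hmin'
  set i0 : Fin n := ⟨0, hn⟩ with hi0
  set μ : ℝ := x i0 * (M *ᵥ x) i0 with hμdef
  have hμ : ∀ i, x i * (M *ᵥ x) i = μ := fun i => key i i0
  have hMvnn : ∀ i, 0 ≤ (M *ᵥ x) i := by
    intro i
    rw [hmv]
    exact Finset.sum_nonneg fun l _ => mul_nonneg (hpos i l) (hxpos l).le
  have hμnn : 0 ≤ μ := mul_nonneg (hxpos i0).le (hMvnn i0)
  have hμ0 : 0 < μ := by
    rcases lt_or_eq_of_le hμnn with h | h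
    · exact h
    · exfalso
      have hzero : ∀ i l, M i l = 0 := by
        intro i l
        have hMvi : (M *ᵥ x) i = 0 := by
          have := hμ i
          rw [← h] at this
          rcases mul_eq_zero.mp this with h' | h'
          · exact absurd h' (ne_of_gt (hxpos i))
          · exact h'
        rw [hmv] at hMvi
        have := (Finset.sum_eq_zero_iff_of_nonneg
          (fun l _ => mul_nonneg (hpos i l) (hxpos l).le)).mp hMvi l (Finset.mem_univ l)
        rcases mul_eq_zero.mp this with h' | h'
        · exact h'
        · exact absurd h' (ne_of_gt (hxpos l))
      have huniv : (univ : Finset (Fin n)).Nonempty := ⟨i0, Finset.mem_univ i0⟩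
      have := hblock univ univ huniv huniv (fun s _ t _ => hzero s t)
      rw [Finset.card_univ, Fintype.card_fin] at this
      omega
  set s : ℝ := Real.sqrt μ with hs
  have hs0 : 0 < s := Real.sqrt_pos.mpr hμ0
  have hss : s * s = μ := Real.mul_self_sqrt hμnn
  set d : Fin n → ℝ := fun i => x i / s with hd
  have hdpos : ∀ i, 0 < d i := fun i => div_pos (hxpos i) hs0
  have hentry : ∀ i j, (diagonal d * M * diagonal d) i j = d i * M i j * d j := by
    intro i j
    rw [Matrix.mul_diagonal, Matrix.diagonal_mul]
  have hrow : ∀ i, ∑ j, d i * M i j * d j = 1 := by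
    intro i
    have hterm : ∀ j, d i * M i j * d j = x i * (M i j * x j) / μ := by
      intro j
      rw [hd, ← hss]
      field_simp
    calc ∑ j, d i * M i j * d j = ∑ j, x i * (M i j * x j) / μ :=
          Finset.sum_congr rfl fun j _ => hterm j
      _ = (∑ j, x i * (M i j * x j)) / μ := by rw [Finset.sum_div]
      _ = (x i * ∑ j, M i j * x j) / μ := by rw [Finset.mul_sum]
      _ = (x i * (M *ᵥ x) i) / μ := by rw [← hmv]
      _ = μ / μ := by rw [hμ i]
      _ = 1 := div_self (ne_of_gt hμ0)
  refine ⟨d, hdpos, ?_, ?_, ?_⟩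
  · intro i j
    rw [hentry]
    exact mul_nonneg (mul_nonneg (hdpos i).le (hpos i j)) (hdpos j).le
  · intro i
    calc ∑ j, (diagonal d * M * diagonal d) i j = ∑ j, d i * M i j * d j :=
          Finset.sum_congr rfl fun j _ => hentry i j
      _ = 1 := hrow i
  · intro j
    calc ∑ i, (diagonal d * M * diagonal d) i j = ∑ i, d i * M i j * d j :=
          Finset.sum_congr rfl fun i _ => hentry i j
      _ = ∑ i, d j * M j i * d i := by
          refine Finset.sum_congr rfl fun i _ => ?_
          rw [show M i j = M j i from hsymm.apply j i]
          ring
      _ = 1 := hrow j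
end

section
/- Let G be a finite simple graph on n vertices that is C4-free, and let B be a Hermitian weighted adjacency matrix of G such that every row of B has L² norm 1, i.e. Σ_{j=1}^n |B_{ij}|² = 1 for all i ∈ {1,…,n}. Then n_{≥0}(B) ≥ β n, where β = √3 − 3/2. -/
open Matrix Finset


lemma analytic_step (n : ℕ) (ev : Fin n → ℝ)
    (h1 : ∑ i, ev i = 0) (h2 : ∑ i, ev i ^ 2 = n) (h4 : ∑ i, ev i ^ 4 ≤ 2 * n) :
    (Real.sqrt 3 - 3 / 2) * n ≤ ((univ.filter (fun i => 0 ≤ ev i)).card : ℝ) := by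
  classical
  set P := univ.filter (fun i : Fin n => 0 ≤ ev i) with hP
  set N := univ.filter (fun i : Fin n => ¬ 0 ≤ ev i) with hN
  have hNneg : ∀ i ∈ N, ev i < 0 := by
    intro i hi; simp only [hN, mem_filter] at hi; linarith [not_le.mp hi.2]
  have hPpos : ∀ i ∈ P, 0 ≤ ev i := by
    intro i hi; simp only [hP, mem_filter] at hi; exact hi.2
  set p := (P.card : ℝ) with hp
  set t := ∑ i ∈ P, ev i ^ 2 with ht
  set s := ∑ i ∈ N, ev i ^ 2 with hs
  set T := ∑ i ∈ P, ev i with hT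
  set Q := ∑ i ∈ P, ev i ^ 4 with hQ
  set R := ∑ i ∈ N, ev i ^ 4 with hR
  set M := ∑ i ∈ N, (-ev i) ^ 3 with hM
  have hst : t + s = n := by
    rw [ht, hs, hP, hN, Finset.sum_filter_add_sum_filter_not, h2]
  have hTsum : T + ∑ i ∈ N, ev i = 0 := by
    rw [hT, hP, hN, Finset.sum_filter_add_sum_filter_not, h1]
  have hQR : Q + R ≤ 2 * n := by
    rw [hQ, hR, hP, hN, Finset.sum_filter_add_sum_filter_not]; exact h4
  have ht0 : 0 ≤ t := Finset.sum_nonneg fun i _ => sq_nonneg _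
  have hs0 : 0 ≤ s := Finset.sum_nonneg fun i _ => sq_nonneg _
  have hT0 : 0 ≤ T := Finset.sum_nonneg fun i hi => hPpos i hi
  have hQ0 : 0 ≤ Q := Finset.sum_nonneg fun i _ => by positivity
  have hR0 : 0 ≤ R := Finset.sum_nonneg fun i _ => by positivity
  have hM0 : 0 ≤ M := Finset.sum_nonneg fun i hi =>
    pow_nonneg (by linarith [hNneg i hi]) 3
  have hp0 : 0 ≤ p := by rw [hp]; exact Nat.cast_nonneg _
  -- Cauchy–Schwarz 1 : t² ≤ p Q
  have cs1 : t ^ 2 ≤ p * Q := by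
    have := Finset.sum_mul_sq_le_sq_mul_sq P (fun _ => (1:ℝ)) (fun i => ev i ^ 2)
    simpa [ht, hQ, hp, ← pow_mul] using this
  -- Cauchy–Schwarz 2 : T² ≤ p t
  have cs2 : T ^ 2 ≤ p * t := by
    have := Finset.sum_mul_sq_le_sq_mul_sq P (fun _ => (1:ℝ)) (fun i => ev i)
    simpa [hT, ht, hp] using this
  -- Cauchy–Schwarz 3 : s² ≤ T M
  have cs3 : s ^ 2 ≤ T * M := by
    have key := Finset.sum_mul_sq_le_sq_mul_sq N
      (fun i => Real.sqrt (-ev i)) (fun i => Real.sqrt (-ev i) ^ 3)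
    have e1 : ∑ i ∈ N, Real.sqrt (-ev i) * Real.sqrt (-ev i) ^ 3 = s := by
      rw [hs]; apply Finset.sum_congr rfl
      intro i hi
      have h := (hNneg i hi).le
      have h2 : Real.sqrt (-ev i) ^ 2 = -ev i := Real.sq_sqrt (by linarith)
      calc Real.sqrt (-ev i) * Real.sqrt (-ev i) ^ 3
          = (Real.sqrt (-ev i) ^ 2) ^ 2 := by ring
        _ = ev i ^ 2 := by rw [h2]; ring
    have e2 : ∑ i ∈ N, Real.sqrt (-ev i) ^ 2 = -∑ i ∈ N, ev i := by
      rw [← Finset.sum_neg_distrib]; apply Finset.sum_congr rfl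
      intro i hi; exact Real.sq_sqrt (by linarith [hNneg i hi])
    have e3 : ∑ i ∈ N, (Real.sqrt (-ev i) ^ 3) ^ 2 = M := by
      rw [hM]; apply Finset.sum_congr rfl
      intro i hi
      have h2 : Real.sqrt (-ev i) ^ 2 = -ev i := Real.sq_sqrt (by linarith [hNneg i hi])
      calc (Real.sqrt (-ev i) ^ 3) ^ 2 = (Real.sqrt (-ev i) ^ 2) ^ 3 := by ring
        _ = (-ev i) ^ 3 := by rw [h2]
    have hTN : -∑ i ∈ N, ev i = T := by linarith
    rw [e1, e2, e3, hTN] at key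
    exact key
  -- Cauchy–Schwarz 4 : M² ≤ s R
  have cs4 : M ^ 2 ≤ s * R := by
    have key := Finset.sum_mul_sq_le_sq_mul_sq N (fun i => -ev i) (fun i => (-ev i) ^ 2)
    have e1 : ∑ i ∈ N, -ev i * (-ev i) ^ 2 = M := by
      rw [hM]; apply Finset.sum_congr rfl; intro i _; ring
    have e2 : ∑ i ∈ N, (-ev i) ^ 2 = s := by
      rw [hs]; apply Finset.sum_congr rfl; intro i _; ring
    have e3 : ∑ i ∈ N, ((-ev i) ^ 2) ^ 2 = R := by
      rw [hR]; apply Finset.sum_congr rfl; intro i _; ring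
    rw [e1, e2, e3] at key; exact key
  -- combine: s³ ≤ p t R
  have key1 : s ^ 3 ≤ p * t * R := by
    rcases eq_or_lt_of_le hs0 with h | h
    · rw [← h]; simpa using mul_nonneg (mul_nonneg hp0 ht0) hR0
    · have c1 : (s ^ 2) ^ 2 ≤ (T * M) ^ 2 := pow_le_pow_left₀ (sq_nonneg s) cs3 2
      have c2 : T ^ 2 * M ^ 2 ≤ (p * t) * (s * R) :=
        mul_le_mul cs2 cs4 (sq_nonneg M) (mul_nonneg hp0 ht0)
      have h4' : s ^ 4 ≤ p * t * R * s := by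
        calc s ^ 4 = (s ^ 2) ^ 2 := by ring
          _ ≤ (T * M) ^ 2 := c1
          _ = T ^ 2 * M ^ 2 := by ring
          _ ≤ (p * t) * (s * R) := c2
          _ = p * t * R * s := by ring
      have h4'' : s ^ 3 * s ≤ (p * t * R) * s := by
        calc s ^ 3 * s = s ^ 4 := by ring
          _ ≤ p * t * R * s := h4'
      exact le_of_mul_le_mul_right h4'' h
  have key2 : t ^ 3 ≤ p * t * Q := by nlinarith
  have main : s ^ 3 + t ^ 3 ≤ 2 * n * (p * t) := by nlinarith [mul_nonneg (mul_nonneg hp0 ht0) (sub_nonneg.mpr hQR)]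
  -- algebraic identity
  have h3 : Real.sqrt 3 ^ 2 = 3 := Real.sq_sqrt (by norm_num)
  have ident : s ^ 3 + t ^ 3 = (2 * Real.sqrt 3 - 3) * (n:ℝ) ^ 2 * t + n * ((n:ℝ) - Real.sqrt 3 * t) ^ 2 := by
    have hsn : s = n - t := by linarith
    rw [hsn]; linear_combination (-(n:ℝ) * t ^ 2) * h3
  rcases eq_or_lt_of_le ht0 with htz | htpos
  · -- t = 0 ⇒ T = 0 ⇒ s = 0 ⇒ n = 0
    have hT2 : T ^ 2 ≤ 0 := by rw [← htz, mul_zero] at cs2; exact cs2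
    have hT' : T = 0 := pow_eq_zero_iff two_ne_zero |>.mp (le_antisymm hT2 (sq_nonneg T))
    have hs2 : s ^ 2 ≤ 0 := by rw [hT', zero_mul] at cs3; exact cs3
    have hs' : s = 0 := pow_eq_zero_iff two_ne_zero |>.mp (le_antisymm hs2 (sq_nonneg s))
    have hn : (n : ℝ) = 0 := by linarith
    rw [hn, mul_zero]; exact hp0
  · have hn : (0:ℝ) < n := by linarith
    have final : (2 * Real.sqrt 3 - 3) * (n:ℝ) ^ 2 * t ≤ 2 * n * (p * t) := by
      have hnn : 0 ≤ (n:ℝ) * ((n:ℝ) - Real.sqrt 3 * t) ^ 2 := mul_nonneg hn.le (sq_nonneg _)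
      linarith [ident, main]
    have final' : ((2 * Real.sqrt 3 - 3) * n) * (n * t) ≤ (2 * p) * (n * t) := by
      calc ((2 * Real.sqrt 3 - 3) * n) * (n * t)
          = (2 * Real.sqrt 3 - 3) * (n:ℝ) ^ 2 * t := by ring
        _ ≤ 2 * n * (p * t) := final
        _ = (2 * p) * (n * t) := by ring
    have h2p := le_of_mul_le_mul_right final' (mul_pos hn htpos)
    linarith


lemma herm_apply {n : ℕ} {B : Matrix (Fin n) (Fin n) ℂ} (hB : B.IsHermitian) (i j : Fin n) :
    B j i = star (B i j) := by
  conv_lhs => rw [← hB]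
  rw [Matrix.conjTranspose_apply]

lemma mul_star_self_eq (z : ℂ) : z * star z = ((‖z‖ ^ 2 : ℝ) : ℂ) := by
  rw [Complex.star_def, Complex.mul_conj]
  norm_cast
  rw [Complex.normSq_eq_norm_sq]

lemma trace_pow_eq {n : ℕ} (B : Matrix (Fin n) (Fin n) ℂ) (hB : B.IsHermitian) (k : ℕ) :
    (B ^ k).trace = ∑ i, (hB.eigenvalues i : ℂ) ^ k := by
  set U : Matrix (Fin n) (Fin n) ℂ := (hB.eigenvectorUnitary : Matrix (Fin n) (Fin n) ℂ) with hU
  set D : Matrix (Fin n) (Fin n) ℂ := diagonal (RCLike.ofReal ∘ hB.eigenvalues) with hD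
  have hUU : U * star U = 1 := (Matrix.mem_unitaryGroup_iff).mp hB.eigenvectorUnitary.2
  have hUU' : star U * U = 1 := (Matrix.mem_unitaryGroup_iff').mp hB.eigenvectorUnitary.2
  have key : ∀ m : ℕ, B ^ m = U * D ^ m * star U := by
    intro m
    induction m with
    | zero => simp [pow_zero, hUU]
    | succ m ih =>
      have hBs : B = U * D * star U := hB.spectral_theorem
      calc B ^ (m + 1) = B ^ m * B := pow_succ B m
        _ = (U * D ^ m * star U) * (U * D * star U) := by rw [ih, ← hBs]
        _ = U * (D ^ m * ((star U * U) * (D * star U))) := by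
            simp only [Matrix.mul_assoc]
        _ = U * D ^ (m + 1) * star U := by
            rw [hUU', Matrix.one_mul, pow_succ]
            simp only [Matrix.mul_assoc]
  rw [key k, Matrix.trace_mul_cycle, hUU', Matrix.one_mul, hD, Matrix.diagonal_pow,
    Matrix.trace_diagonal]
  simp

lemma trace_sq_entries {n : ℕ} (A : Matrix (Fin n) (Fin n) ℂ) (hA : A.IsHermitian) :
    (A ^ 2).trace = ((∑ i, ∑ j, ‖A i j‖ ^ 2 : ℝ) : ℂ) := by
  rw [pow_two, Matrix.trace]
  push_cast
  simp only [Matrix.diag_apply, Matrix.mul_apply]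
  refine Finset.sum_congr rfl fun i _ => Finset.sum_congr rfl fun j _ => ?_
  rw [herm_apply hA i j, mul_star_self_eq]
  push_cast
  ring


lemma single_support_norm_sq {n : ℕ} (f : Fin n → ℂ)
    (h : ∀ k l : Fin n, f k ≠ 0 → f l ≠ 0 → k = l) :
    ‖∑ k, f k‖ ^ 2 ≤ ∑ k, ‖f k‖ ^ 2 := by
  by_cases hz : ∀ k, f k = 0
  · simp [hz]
  · push_neg at hz
    obtain ⟨k₀, hk₀⟩ := hz
    have hsum : ∑ k, f k = f k₀ := by
      apply Finset.sum_eq_single k₀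
      · intro b _ hb
        by_contra hb0
        exact hb (h b k₀ hb0 hk₀)
      · intro hmem; exact absurd (Finset.mem_univ k₀) hmem
    rw [hsum]
    exact Finset.single_le_sum (f := fun k => ‖f k‖ ^ 2) (fun i _ => by positivity) (Finset.mem_univ k₀)

/-- A graph is `C4`-free if it has no cycle of length 4 as a (not necessarily induced)
subgraph: there are no four pairwise distinct vertices `a, b, c, d` with
`ab`, `bc`, `cd`, `da` all edges. -/
def C4Free {V : Type*} (G : SimpleGraph V) : Prop :=
  ∀ a b c d : V, a ≠ b → a ≠ c → a ≠ d → b ≠ c → b ≠ d → c ≠ d →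
    G.Adj a b → G.Adj b c → G.Adj c d → ¬ G.Adj d a

/-- If `G` is a `C4`-free graph on `n` vertices and `B` is a Hermitian weighted adjacency
matrix of `G` each of whose rows has `L²` norm `1`, then `B` has at least `β n`
non-negative eigenvalues, where `β = √3 - 3/2`. -/
theorem inertia_bound_C4_free_normalized (n : ℕ) (G : SimpleGraph (Fin n)) (hG : C4Free G)
    (B : Matrix (Fin n) (Fin n) ℂ) (hB : B.IsHermitian)
    (hsupp : ∀ i j, ¬ G.Adj i j → B i j = 0)
    (hnorm : ∀ i, ∑ j, ‖B i j‖ ^ 2 = 1) :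
    (Real.sqrt 3 - 3 / 2) * n ≤ (Fintype.card {i : Fin n // 0 ≤ hB.eigenvalues i} : ℝ) := by
  classical
  have herm : ∀ i j, B j i = star (B i j) := herm_apply hB
  have hnorm' : ∀ k, ∑ i, ‖B i k‖ ^ 2 = 1 := by
    intro k
    rw [← hnorm k]
    refine Finset.sum_congr rfl fun i _ => ?_
    rw [herm k i, norm_star]
  have hdiag : ∀ i, B i i = 0 := fun i => hsupp i i (G.loopless.irrefl i)
  set ev : Fin n → ℝ := hB.eigenvalues with hev
  -- first moment
  have h1 : ∑ i, ev i = 0 := by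
    have t1 := trace_pow_eq B hB 1
    rw [pow_one] at t1
    have tr0 : B.trace = 0 := by
      rw [Matrix.trace]
      refine Finset.sum_eq_zero fun i _ => ?_
      simpa [Matrix.diag_apply] using hdiag i
    rw [tr0] at t1
    have : ((∑ i, ev i : ℝ) : ℂ) = 0 := by
      push_cast
      simpa using t1.symm
    exact_mod_cast this
  -- second moment
  have h2 : ∑ i, ev i ^ 2 = n := by
    have t2 := trace_pow_eq B hB 2
    rw [trace_sq_entries B hB] at t2
    have hsum : ∑ i, ∑ j, ‖B i j‖ ^ 2 = (n : ℝ) := by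
      calc ∑ i, ∑ j, ‖B i j‖ ^ 2 = ∑ _i : Fin n, (1:ℝ) :=
            Finset.sum_congr rfl fun i _ => hnorm i
        _ = n := by simp
    rw [hsum] at t2
    have : ((∑ i, ev i ^ 2 : ℝ) : ℂ) = ((n : ℝ) : ℂ) := by
      push_cast
      simpa using t2.symm
    exact_mod_cast this
  -- fourth moment
  set A : Matrix (Fin n) (Fin n) ℂ := B ^ 2 with hA
  have hAh : A.IsHermitian := hB.pow 2
  have hAdiag : ∀ i, A i i = 1 := by
    intro i
    rw [hA, pow_two, Matrix.mul_apply]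
    have : ∀ j, B i j * B j i = ((‖B i j‖ ^ 2 : ℝ) : ℂ) := fun j => by
      rw [herm i j, mul_star_self_eq]
    rw [Finset.sum_congr rfl fun j _ => this j]
    rw [← Complex.ofReal_sum]
    rw [hnorm i]
    norm_num
  -- off-diagonal bound
  have hoff : ∀ i j : Fin n, i ≠ j → ‖A i j‖ ^ 2 ≤ ∑ k, ‖B i k‖ ^ 2 * ‖B k j‖ ^ 2 := by
    intro i j hij
    have hAij : A i j = ∑ k, B i k * B k j := by rw [hA, pow_two, Matrix.mul_apply]
    rw [hAij]
    have hb := single_support_norm_sq (fun k => B i k * B k j) ?_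
    · refine hb.trans (le_of_eq ?_)
      refine Finset.sum_congr rfl fun k _ => ?_
      rw [norm_mul, mul_pow]
    · intro k l hk hl
      have hik : G.Adj i k := by
        by_contra hc
        exact hk (show B i k * B k j = 0 by rw [hsupp i k hc, zero_mul])
      have hkj : G.Adj k j := by
        by_contra hc
        exact hk (show B i k * B k j = 0 by rw [hsupp k j hc, mul_zero])
      have hil : G.Adj i l := by
        by_contra hc
        exact hl (show B i l * B l j = 0 by rw [hsupp i l hc, zero_mul])
      have hlj : G.Adj l j := by
        by_contra hc
        exact hl (show B i l * B l j = 0 by rw [hsupp l j hc, mul_zero])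
      by_contra hkl
      exact hG i k j l hik.ne hij hil.ne hkj.ne hkl hlj.ne' hik hkj hlj.symm hil.symm
  -- total fourth-moment bound
  have hbound : ∑ i, ∑ j, ‖A i j‖ ^ 2 ≤ 2 * n := by
    have hrow : ∀ i, ∑ j, ‖A i j‖ ^ 2 ≤ 2 := by
      intro i
      have hsplit : ∑ j, ‖A i j‖ ^ 2 = ‖A i i‖ ^ 2 + ∑ j ∈ univ.erase i, ‖A i j‖ ^ 2 :=
        (Finset.add_sum_erase univ _ (mem_univ i)).symm
      rw [hsplit, hAdiag i]
      have hoffsum : ∑ j ∈ univ.erase i, ‖A i j‖ ^ 2 ≤ 1 := by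
        have step1 : ∑ j ∈ univ.erase i, ‖A i j‖ ^ 2
            ≤ ∑ j ∈ univ.erase i, ∑ k, ‖B i k‖ ^ 2 * ‖B k j‖ ^ 2 := by
          refine Finset.sum_le_sum fun j hj => ?_
          exact hoff i j (Finset.ne_of_mem_erase hj).symm
        have step2 : ∑ j ∈ univ.erase i, ∑ k, ‖B i k‖ ^ 2 * ‖B k j‖ ^ 2
            ≤ ∑ j, ∑ k, ‖B i k‖ ^ 2 * ‖B k j‖ ^ 2 := by
          refine Finset.sum_le_sum_of_subset_of_nonneg (Finset.erase_subset i univ) ?_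
          intro j _ _
          positivity
        have step3 : ∑ j, ∑ k : Fin n, ‖B i k‖ ^ 2 * ‖B k j‖ ^ 2 = 1 := by
          rw [Finset.sum_comm]
          have : ∀ k, ∑ j, ‖B i k‖ ^ 2 * ‖B k j‖ ^ 2 = ‖B i k‖ ^ 2 := by
            intro k
            rw [← Finset.mul_sum, hnorm k, mul_one]
          rw [Finset.sum_congr rfl fun k _ => this k, hnorm i]
        linarith [step1.trans (step2.trans_eq step3)]
      simp only [norm_one, one_pow]
      linarith
    calc ∑ i, ∑ j, ‖A i j‖ ^ 2 ≤ ∑ _i : Fin n, (2:ℝ) := Finset.sum_le_sum fun i _ => hrow i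
      _ = 2 * n := by simp [mul_comm]
  have h4 : ∑ i, ev i ^ 4 ≤ 2 * n := by
    have t4 := trace_pow_eq B hB 4
    have hpow : B ^ 4 = A ^ 2 := by rw [hA, ← pow_mul]
    rw [hpow, trace_sq_entries A hAh] at t4
    have : (∑ i, ev i ^ 4 : ℝ) = ∑ i, ∑ j, ‖A i j‖ ^ 2 := by
      have : ((∑ i, ev i ^ 4 : ℝ) : ℂ) = ((∑ i, ∑ j, ‖A i j‖ ^ 2 : ℝ) : ℂ) := by
        push_cast
        simpa using t4.symm
      exact_mod_cast this
    rw [this]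
    exact hbound
  have key := analytic_step n ev h1 h2 h4
  rw [Fintype.card_subtype]
  exact key
end

section
/- Let G be a finite simple graph on vertex set {1,…,n} that is C4-free, and let B be a Hermitian weighted adjacency matrix of G. Then the trace of B⁴ satisfies tr(B⁴) = 2 Σ_{i=1}^n (Σ_{j=1}^n |B_{ij}|²)² − Σ_{i=1}^n Σ_{j=1}^n |B_{ij}|⁴ (where tr(B⁴) is a non-negative real number since B⁴ = (B²)² with B² Hermitian). -/
open Matrix Finset

private lemma real_identity (n : ℕ) (a : Fin n → Fin n → ℝ) (hs : ∀ i j, a i j = a j i) :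
    (∑ i, ∑ l, ∑ j, a i j * a i l) + (∑ i, ∑ l, ∑ k, a i l * a l k)
      - ∑ i, ∑ l, a i l * a i l
    = 2 * ∑ i, (∑ j, a i j) ^ 2 - ∑ i, ∑ j, a i j ^ 2 := by
  have h1 : ∑ i, ∑ l, ∑ j, a i j * a i l = ∑ i, (∑ j, a i j) ^ 2 := by
    refine Finset.sum_congr rfl fun i _ => ?_
    rw [sq, Finset.mul_sum]
    exact Finset.sum_congr rfl fun l _ => (Finset.sum_mul _ _ _).symm
  have h2 : ∑ i, ∑ l, ∑ k, a i l * a l k = ∑ i, (∑ j, a i j) ^ 2 := by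
    rw [Finset.sum_comm]
    refine Finset.sum_congr rfl fun l _ => ?_
    have : ∑ i, ∑ k, a i l * a l k = (∑ i, a i l) * ∑ k, a l k := by
      rw [Finset.sum_mul]
      exact Finset.sum_congr rfl fun i _ => (Finset.mul_sum _ _ _).symm
    rw [this, sq]
    congr 1
    exact Finset.sum_congr rfl fun i _ => hs i l
  have h3 : ∑ i, ∑ l, a i l * a i l = ∑ i, ∑ j, a i j ^ 2 := by
    refine Finset.sum_congr rfl fun i _ => Finset.sum_congr rfl fun l _ => (sq _).symm
  rw [h1, h2, h3]; ring

set_option maxHeartbeats 1600000 in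
/-- If `G` is a `C4`-free graph on `n` vertices and `B` is a Hermitian weighted adjacency
matrix of `G`, then
`tr(B⁴) = 2 ∑ᵢ (∑ⱼ |Bᵢⱼ|²)² - ∑ᵢ ∑ⱼ |Bᵢⱼ|⁴`. -/
theorem trace_pow_four_of_C4_free (n : ℕ) (G : SimpleGraph (Fin n)) (hG : C4Free G)
    (B : Matrix (Fin n) (Fin n) ℂ) (hB : B.IsHermitian)
    (hsupp : ∀ i j, ¬ G.Adj i j → B i j = 0) :
    (B ^ 4).trace =
      ((2 * ∑ i, (∑ j, ‖B i j‖ ^ 2) ^ 2 - ∑ i, ∑ j, ‖B i j‖ ^ 4 : ℝ) : ℂ) := by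
  have hconj : ∀ i j, B j i = (starRingEnd ℂ) (B i j) := by
    intro i j
    have h := hB.apply j i
    rw [← h]; simp
  have key : ∀ i j, B i j * B j i = ((‖B i j‖ ^ 2 : ℝ) : ℂ) := by
    intro i j
    rw [hconj i j, Complex.mul_conj]
    norm_cast
    simp [Complex.normSq_eq_norm_sq]
  have hz : ∀ i j k l : Fin n, i ≠ k → j ≠ l → B i j * B j k * B k l * B l i = 0 := by
    intro i j k l hik hjl
    by_cases h1 : G.Adj i j
    · by_cases h2 : G.Adj j k
      · by_cases h3 : G.Adj k l
        · by_cases hil : i = l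
          · subst hil
            rw [hsupp i i (by simp)]; ring
          · rw [hsupp l i (hG i j k l h1.ne hik hil h2.ne hjl h3.ne h1 h2 h3)]; ring
        · rw [hsupp k l h3]; ring
      · rw [hsupp j k h2]; ring
    · rw [hsupp i j h1]; ring
  have hexp : (B ^ 4).trace = ∑ i, ∑ l, ∑ k, ∑ j, B i j * B j k * B k l * B l i := by
    have h : B ^ 4 = B * B * B * B := by rw [pow_succ, pow_succ, pow_succ, pow_one]
    rw [h]
    simp only [Matrix.trace, Matrix.diag, Matrix.mul_apply, Finset.sum_mul]
  have step : ∀ i j k l : Fin n, B i j * B j k * B k l * B l i =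
      (if i = k then B i j * B j k * B k l * B l i else 0)
      + (if l = j then B i j * B j k * B k l * B l i else 0)
      - (if i = k then (if l = j then B i j * B j k * B k l * B l i else 0) else 0) := by
    intro i j k l
    by_cases h1 : i = k <;> by_cases h2 : l = j
    · simp [h1, h2]
    · simp [h1, h2]
    · simp [h1, h2]
    · rw [hz i j k l h1 (fun h => h2 h.symm)]; simp [h1, h2]
  have hsplit : ∑ i, ∑ l, ∑ k, ∑ j, B i j * B j k * B k l * B l i =
      (∑ i, ∑ l, ∑ j, ((‖B i j‖^2 : ℝ) : ℂ) * ((‖B i l‖^2 : ℝ) : ℂ))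
      + (∑ i, ∑ l, ∑ k, ((‖B i l‖^2 : ℝ) : ℂ) * ((‖B l k‖^2 : ℝ) : ℂ))
      - ∑ i, ∑ l, ((‖B i l‖^2 : ℝ) : ℂ) * ((‖B i l‖^2 : ℝ) : ℂ) := by
    calc ∑ i, ∑ l, ∑ k, ∑ j, B i j * B j k * B k l * B l i
        = ∑ i, ∑ l, ∑ k, ∑ j,
          ((if i = k then B i j * B j k * B k l * B l i else 0)
          + (if l = j then B i j * B j k * B k l * B l i else 0)
          - (if i = k then (if l = j then B i j * B j k * B k l * B l i else 0) else 0)) := by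
          refine Finset.sum_congr rfl fun i _ => Finset.sum_congr rfl fun l _ =>
            Finset.sum_congr rfl fun k _ => Finset.sum_congr rfl fun j _ => step i j k l
      _ = _ := by
          simp only [Finset.sum_sub_distrib, Finset.sum_add_distrib, Finset.sum_ite_eq,
            Finset.mem_univ, if_true, Finset.sum_ite_irrel, Finset.sum_const_zero]
          congr 1
          · congr 1
            · refine Finset.sum_congr rfl fun i _ => Finset.sum_congr rfl fun l _ =>
                Finset.sum_congr rfl fun j _ => ?_
              rw [show B i j * B j i * B i l * B l i = (B i j * B j i) * (B i l * B l i) by ring,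
                key, key]
            · refine Finset.sum_congr rfl fun i _ => Finset.sum_congr rfl fun l _ =>
                Finset.sum_congr rfl fun k _ => ?_
              rw [show B i l * B l k * B k l * B l i = (B i l * B l i) * (B l k * B k l) by ring,
                key, key]
          · refine Finset.sum_congr rfl fun i _ => Finset.sum_congr rfl fun l _ => ?_
            rw [show B i l * B l i * B i l * B l i = (B i l * B l i) * (B i l * B l i) by ring,
              key]
  rw [hexp, hsplit]
  have hs : ∀ i j, ‖B i j‖ ^ 2 = ‖B j i‖ ^ 2 := by
    intro i j
    rw [hconj i j]
    simp
  push_cast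
  rw [show (∑ i, ∑ l, ∑ j, (‖B i j‖^2 : ℂ) * (‖B i l‖^2 : ℂ))
      + (∑ i, ∑ l, ∑ k, (‖B i l‖^2 : ℂ) * (‖B l k‖^2 : ℂ))
      - ∑ i, ∑ l, (‖B i l‖^2 : ℂ) * (‖B i l‖^2 : ℂ)
      = (((∑ i, ∑ l, ∑ j, ‖B i j‖^2 * ‖B i l‖^2)
      + (∑ i, ∑ l, ∑ k, ‖B i l‖^2 * ‖B l k‖^2)
      - ∑ i, ∑ l, ‖B i l‖^2 * ‖B i l‖^2 : ℝ) : ℂ) by push_cast; ring]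
  rw [show (2 * ∑ i, ((∑ j, (‖B i j‖:ℂ) ^ 2) ^ 2) - ∑ i, ∑ j, (‖B i j‖:ℂ) ^ 4 : ℂ)
      = ((2 * ∑ i, (∑ j, ‖B i j‖ ^ 2) ^ 2 - ∑ i, ∑ j, ‖B i j‖ ^ 4 : ℝ) : ℂ) by push_cast; ring]
  rw [Complex.ofReal_inj]
  have := real_identity n (fun i j => ‖B i j‖ ^ 2) (fun i j => hs i j)
  rw [this]
  congr 1
  refine Finset.sum_congr rfl fun i _ => Finset.sum_congr rfl fun j _ => ?_
  rw [← pow_mul]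
end

section
/- For every finite simple graph G on n vertices, there exists a weighted adjacency matrix A of G such that n_{≥0}(A) = χ(Ḡ), the clique cover number of G (equal to the chromatic number of the complement graph Ḡ). -/
open Matrix Finset

private lemma rank_conj_unitary' {n : ℕ} {U : Matrix (Fin n) (Fin n) ℝ}
    (hU : U ∈ Matrix.unitaryGroup (Fin n) ℝ) (M : Matrix (Fin n) (Fin n) ℝ) :
    (U * M * star U).rank = M.rank := by
  have h1 : U * star U = 1 := (Matrix.mem_unitaryGroup_iff).mp hU
  have h2 : star U * U = 1 := (Matrix.mem_unitaryGroup_iff').mp hU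
  have hU1 : IsUnit U.det := IsUnit.of_mul_eq_one (star U).det (by rw [← det_mul, h1, det_one])
  have hU2 : IsUnit (star U).det := IsUnit.of_mul_eq_one U.det (by rw [← det_mul, h2, det_one])
  rw [Matrix.rank_mul_eq_left_of_isUnit_det (star U) (U * M) hU2,
    Matrix.rank_mul_eq_right_of_isUnit_det U M hU1]

/-- **Alon's observation.** Every graph `G` on `n` vertices has a symmetric weighted
adjacency matrix `A` whose number of non-negative eigenvalues (with multiplicity) equals
the clique cover number of `G`, i.e. the chromatic number of the complement of `G`. -/
theorem exists_weight_matrix_nonneg_eigenvalues_eq_cliqueCover (n : ℕ)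
    (G : SimpleGraph (Fin n)) :
    ∃ (A : Matrix (Fin n) (Fin n) ℝ) (hA : A.IsHermitian),
      (∀ i j, ¬ G.Adj i j → A i j = 0) ∧
      (Fintype.card {i : Fin n // 0 ≤ hA.eigenvalues i} : ℕ∞) = Gᶜ.chromaticNumber := by
  classical
  -- Set up a coloring of `Gᶜ` with exactly `k = χ(Gᶜ)` colors; it is surjective.
  have hcol : Gᶜ.Colorable (Fintype.card (Fin n)) := Gᶜ.colorable_of_fintype
  set k := (Gᶜ.chromaticNumber).toNat with hk
  have hne : Gᶜ.chromaticNumber ≠ ⊤ := by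
    rw [SimpleGraph.chromaticNumber_ne_top_iff_exists]; exact ⟨_, hcol⟩
  have hχ : Gᶜ.chromaticNumber = (k : ℕ∞) := (ENat.coe_toNat hne).symm
  have hk_col : Gᶜ.Colorable k := SimpleGraph.colorable_chromaticNumber hcol
  obtain ⟨C⟩ := hk_col
  have hsurj : Function.Surjective C :=
    (SimpleGraph.le_chromaticNumber_iff_forall_surjective.mp hχ.ge) C
  -- The 0/1 "color incidence" matrix `N` and the matrix `A = N * Nᵀ - 1`.
  set N : Matrix (Fin n) (Fin k) ℝ := Matrix.of fun i t => if C i = t then 1 else 0 with hN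
  have hNH : Nᴴ = Nᵀ := by ext i j; simp [conjTranspose_apply]
  set B : Matrix (Fin n) (Fin n) ℝ := N * Nᵀ with hBdef
  have hBent : ∀ i j, B i j = if C i = C j then 1 else 0 := by
    intro i j
    simp only [hBdef, mul_apply, hN, transpose_apply, of_apply, ite_mul, one_mul, zero_mul]
    rw [Finset.sum_ite_eq univ (C i) (fun t => if C j = t then (1:ℝ) else 0)]
    simp [eq_comm]
  set d : Fin k → ℝ := fun t => ∑ i, if C i = t then 1 else 0 with hd
  have hNTN : Nᵀ * N = diagonal d := by
    ext t s
    by_cases hts : t = s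
    · subst hts
      simp only [mul_apply, hN, transpose_apply, of_apply, diagonal_apply_eq, hd, ite_mul,
        one_mul, zero_mul]
      exact Finset.sum_congr rfl fun i _ => by split <;> simp_all
    · rw [diagonal_apply_ne _ hts]
      simp only [mul_apply, hN, transpose_apply, of_apply]
      refine Finset.sum_eq_zero fun i _ => ?_
      by_cases h1 : C i = t <;> by_cases h2 : C i = s <;> simp_all
  have hd1 : ∀ t, 1 ≤ d t := by
    intro t
    obtain ⟨i, hi⟩ := hsurj t
    have := Finset.single_le_sum (f := fun i => if C i = t then (1:ℝ) else 0)
      (fun j _ => by positivity) (Finset.mem_univ i)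
    simpa [hd, hi] using this
  set A : Matrix (Fin n) (Fin n) ℝ := B - 1 with hAdef
  have hBH : B.IsHermitian := by
    rw [hBdef, ← hNH]; exact isHermitian_mul_conjTranspose_self N
  have hA : A.IsHermitian := hBH.sub isHermitian_one
  have hBA : B = A + 1 := by rw [hAdef, sub_add_cancel]
  -- positivity facts
  have hBpsd : B.PosSemidef := by
    have := posSemidef_self_mul_conjTranspose N
    rwa [hNH] at this
  have hQpsd : (B * B - B).PosSemidef := by
    have hdiag : (diagonal (fun t => d t - 1)).PosSemidef :=
      Matrix.posSemidef_diagonal_iff.mpr fun t => by linarith [hd1 t]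
    have h2 := hdiag.mul_mul_conjTranspose_same N
    rw [hNH] at h2
    have key : N * diagonal (fun t => d t - 1) * Nᵀ = B * B - B := by
      have hdd : diagonal (fun t => d t - 1) = Nᵀ * N - 1 := by
        rw [hNTN, ← diagonal_one, diagonal_sub]
      rw [hdd, Matrix.mul_sub, Matrix.mul_one, Matrix.sub_mul, hBdef]
      simp only [Matrix.mul_assoc]
    rwa [key] at h2
  -- every eigenvalue of `A` is `-1` or nonnegative
  have hdich : ∀ i, hA.eigenvalues i = -1 ∨ 0 ≤ hA.eigenvalues i := by
    intro i
    set μ := hA.eigenvalues i with hμ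
    set v : Fin n → ℝ := ⇑(hA.eigenvectorBasis i) with hv
    have hsv : star v = v := by ext j; simp
    have hvv : v ⬝ᵥ v = 1 := by
      have h1 : ‖hA.eigenvectorBasis i‖ = 1 := hA.eigenvectorBasis.orthonormal.1 i
      have h2 : (inner ℝ (hA.eigenvectorBasis i) (hA.eigenvectorBasis i) : ℝ) = 1 := by
        rw [real_inner_self_eq_norm_mul_norm, h1, mul_one]
      rw [PiLp.inner_apply] at h2
      simp only [RCLike.inner_apply, starRingEnd_apply, star_trivial] at h2
      simpa [dotProduct] using h2
    have hAv : A *ᵥ v = μ • v := hA.mulVec_eigenvectorBasis i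
    have hBv : B *ᵥ v = (μ + 1) • v := by
      rw [hBA, add_mulVec, one_mulVec, hAv, add_smul, one_smul]
    have h1 : 0 ≤ μ + 1 := by
      have := hBpsd.dotProduct_mulVec_nonneg v
      rwa [hBv, hsv, dotProduct_smul, smul_eq_mul, hvv, mul_one] at this
    have h2 : 0 ≤ (μ + 1) * (μ + 1) - (μ + 1) := by
      have := hQpsd.dotProduct_mulVec_nonneg v
      rwa [sub_mulVec, ← mulVec_mulVec, hBv, mulVec_smul, hBv, smul_smul, ← sub_smul, hsv,
        dotProduct_smul, smul_eq_mul, hvv, mul_one] at this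
    by_cases h : 0 ≤ μ
    · right; exact h
    · left; nlinarith
  -- rank computation, two ways
  have hrank1 : B.rank = Fintype.card {i // hA.eigenvalues i + 1 ≠ 0} := by
    set U := (hA.eigenvectorUnitary : Matrix (Fin n) (Fin n) ℝ) with hU
    have hU1 : U * star U = 1 := (Matrix.mem_unitaryGroup_iff).mp hA.eigenvectorUnitary.2
    have hdec : B = U * diagonal (fun i => hA.eigenvalues i + 1) * star U := by
      rw [hBA]
      conv_lhs => rw [hA.spectral_theorem]
      rw [Unitary.conjStarAlgAut_apply]
      have hone : (1 : Matrix (Fin n) (Fin n) ℝ) = U * 1 * star U := by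
        rw [Matrix.mul_one, hU1]
      conv_lhs => rw [hone]
      rw [← Matrix.add_mul, ← Matrix.mul_add]
      rw [← diagonal_one, diagonal_add]
      norm_num [Function.comp]
      rfl
    rw [hdec, rank_conj_unitary' hA.eigenvectorUnitary.2, rank_diagonal]
  have hrank2 : B.rank = k := by
    rw [hBdef, rank_self_mul_transpose, ← rank_transpose_mul_self, hNTN, rank_diagonal]
    rw [Fintype.card_congr (Equiv.subtypeUnivEquiv fun t => by
      have := hd1 t; intro h0; rw [h0] at this; linarith)]
    exact Fintype.card_fin k
  -- assemble
  refine ⟨A, hA, ?_, ?_⟩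
  · intro i j hij
    by_cases hij' : i = j
    · subst hij'
      simp [hAdef, Matrix.sub_apply, hBent i i]
    · have hadj : Gᶜ.Adj i j := ⟨hij', hij⟩
      have hc : C i ≠ C j := C.valid hadj
      simp [hAdef, Matrix.sub_apply, hBent i j, hc, one_apply_ne hij']
  · rw [hχ]
    norm_cast
    have hcc : Fintype.card {i : Fin n // 0 ≤ hA.eigenvalues i}
        = Fintype.card {i // hA.eigenvalues i + 1 ≠ 0} := by
      refine Fintype.card_congr (Equiv.subtypeEquivRight fun i => ?_)
      constructor
      · intro h h1; nlinarith
      · intro h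
        rcases hdich i with h' | h'
        · exact absurd (by rw [h']; ring) h
        · exact h'
    rw [hcc, ← hrank1, hrank2]
end

section
/- Let d ≥ 1 and let G be the disjoint union of the complete bipartite graph K_{d,d} with d disjoint copies of the complete graph K_{d+1}, so that G has n = 2d + d(d+1) vertices. Then α(G) = 2d, and the (ordinary 0/1) adjacency matrix of G has maximum eigenvalue λ_max = d and minimum eigenvalue λ_min = −d; consequently |λ_min/(λ_max − λ_min)| · n = n/2. -/
open Matrix Finset

attribute [local instance] Classical.propDecidable

/-- `d` disjoint copies of the complete graph `K_{d+1}`, on vertex set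
`Fin d × Fin (d+1)`: two vertices are adjacent iff they are distinct and lie in the same
copy. -/
def cliqueCopies (d : ℕ) : SimpleGraph (Fin d × Fin (d + 1)) where
  Adj u v := u.1 = v.1 ∧ u ≠ v
  symm := ⟨fun _ _ h => ⟨h.1.symm, h.2.symm⟩⟩
  loopless := ⟨fun _ h => h.2 rfl⟩

/-- The disjoint union of the complete bipartite graph `K_{d,d}` with `d` disjoint copies of
the complete graph `K_{d+1}`. -/
def bipartitePlusCliques (d : ℕ) :
    SimpleGraph ((Fin d ⊕ Fin d) ⊕ (Fin d × Fin (d + 1))) :=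
  (completeBipartiteGraph (Fin d) (Fin d)).sum (cliqueCopies d)

/-- The adjacency matrix of a simple graph, viewed as a real matrix, is Hermitian. -/
lemma adjMatrix_isHermitian' {V : Type*} [Fintype V] (G : SimpleGraph V)
    [DecidableRel G.Adj] : (G.adjMatrix ℝ).IsHermitian := by
  ext i j
  simp [Matrix.conjTranspose_apply, SimpleGraph.adj_comm]

/- ### Auxiliary lemmas -/

/-- A nonnegative matrix with constant row sums `d` has all eigenvalues bounded by `d`
in absolute value. -/
lemma row_bound {n : Type*} [Fintype n] {A : Matrix n n ℝ} (hpos : ∀ i j, 0 ≤ A i j)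
    {d : ℝ} (hrow : ∀ i, ∑ j, A i j = d) {μ : ℝ} {v : n → ℝ} (hv : v ≠ 0)
    (hAv : A *ᵥ v = μ • v) : |μ| ≤ d := by
  obtain ⟨i₁, hi₁⟩ := Function.ne_iff.mp hv
  obtain ⟨i₀, -, hmax⟩ := Finset.exists_max_image Finset.univ (fun i => |v i|)
    ⟨i₁, Finset.mem_univ _⟩
  have hpos0 : 0 < |v i₀| := lt_of_lt_of_le (abs_pos.mpr hi₁) (hmax i₁ (Finset.mem_univ _))
  have key : |μ| * |v i₀| ≤ d * |v i₀| := by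
    calc |μ| * |v i₀| = |μ * v i₀| := (abs_mul _ _).symm
    _ = |(A *ᵥ v) i₀| := by rw [hAv]; simp
    _ = |∑ j, A i₀ j * v j| := by rw [Matrix.mulVec, dotProduct]
    _ ≤ ∑ j, |A i₀ j * v j| := Finset.abs_sum_le_sum_abs _ _
    _ = ∑ j, A i₀ j * |v j| := by
        refine Finset.sum_congr rfl fun j _ => ?_
        rw [abs_mul, abs_of_nonneg (hpos i₀ j)]
    _ ≤ ∑ j, A i₀ j * |v i₀| := Finset.sum_le_sum fun j _ =>
        mul_le_mul_of_nonneg_left (hmax j (Finset.mem_univ _)) (hpos i₀ j)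
    _ = d * |v i₀| := by rw [← Finset.sum_mul, hrow]
  exact le_of_mul_le_mul_right key hpos0

/-- Any genuine eigenvalue of a real symmetric matrix appears among
`Matrix.IsHermitian.eigenvalues`. -/
lemma exists_eigenvalue_eq {n : Type*} [Fintype n] [DecidableEq n] {A : Matrix n n ℝ}
    (hA : A.IsHermitian) {μ : ℝ} {v : n → ℝ} (hv : v ≠ 0) (hAv : A *ᵥ v = μ • v) :
    ∃ i, hA.eigenvalues i = μ := by
  by_contra h
  push_neg at h
  set U : Matrix n n ℝ := (hA.eigenvectorUnitary : Matrix n n ℝ) with hU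
  have hUU : U * star U = 1 := (Matrix.mem_unitaryGroup_iff).mp hA.eigenvectorUnitary.2
  have hB : A - μ • (1 : Matrix n n ℝ)
      = U * Matrix.diagonal (fun i => hA.eigenvalues i - μ) * star U := by
    conv_lhs => rw [hA.spectral_theorem]
    have hdiag : Matrix.diagonal (RCLike.ofReal ∘ hA.eigenvalues)
        = Matrix.diagonal (fun i => hA.eigenvalues i - μ) + μ • (1 : Matrix n n ℝ) := by
      rw [Matrix.smul_one_eq_diagonal]
      ext i j
      rcases eq_or_ne i j with rfl | hij
      · simp
      · simp [Matrix.diagonal_apply_ne _ hij]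
    rw [hdiag, Unitary.conjStarAlgAut_apply, ← hU, Matrix.mul_add, Matrix.add_mul, Matrix.mul_smul, Matrix.smul_mul, Matrix.mul_one,
      hUU]
    abel
  have hdet : IsUnit (A - μ • (1 : Matrix n n ℝ)).det := by
    have hUU' : star U * U = 1 := (Matrix.mem_unitaryGroup_iff').mp hA.eigenvectorUnitary.2
    rw [hB, Matrix.det_mul, Matrix.det_mul, mul_comm, ← mul_assoc, ← Matrix.det_mul, hUU',
      Matrix.det_one, one_mul, Matrix.det_diagonal]
    exact isUnit_iff_ne_zero.mpr (Finset.prod_ne_zero_iff.mpr fun i _ => sub_ne_zero.mpr (h i))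
  have hBv : (A - μ • (1 : Matrix n n ℝ)) *ᵥ v = 0 := by
    rw [Matrix.sub_mulVec, hAv, Matrix.smul_mulVec, Matrix.one_mulVec, sub_self]
  have : v = 0 := by
    have := congrArg (fun w => (A - μ • (1 : Matrix n n ℝ))⁻¹ *ᵥ w) hBv
    simpa [Matrix.mulVec_mulVec, Matrix.nonsing_inv_mul _ hdet] using this
  exact hv this

/-- Vertex type of `bipartitePlusCliques d`. -/
abbrev Vtx (d : ℕ) := (Fin d ⊕ Fin d) ⊕ (Fin d × Fin (d + 1))

section AdjLemmas
variable {d : ℕ}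

@[simp] lemma adj_ll {a a' : Fin d} :
    (bipartitePlusCliques d).Adj (.inl (.inl a)) (.inl (.inl a')) ↔ False := by
  simp [bipartitePlusCliques]

@[simp] lemma adj_lr {a b : Fin d} :
    (bipartitePlusCliques d).Adj (.inl (.inl a)) (.inl (.inr b)) ↔ True := by
  simp [bipartitePlusCliques]

@[simp] lemma adj_rl {a b : Fin d} :
    (bipartitePlusCliques d).Adj (.inl (.inr b)) (.inl (.inl a)) ↔ True := by
  simp [bipartitePlusCliques]

@[simp] lemma adj_rr {b b' : Fin d} :
    (bipartitePlusCliques d).Adj (.inl (.inr b)) (.inl (.inr b')) ↔ False := by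
  simp [bipartitePlusCliques]

@[simp] lemma adj_bc {x : Fin d ⊕ Fin d} {u : Fin d × Fin (d+1)} :
    (bipartitePlusCliques d).Adj (.inl x) (.inr u) ↔ False := by
  simp [bipartitePlusCliques]

@[simp] lemma adj_cb {x : Fin d ⊕ Fin d} {u : Fin d × Fin (d+1)} :
    (bipartitePlusCliques d).Adj (.inr u) (.inl x) ↔ False := by
  simp [bipartitePlusCliques]

@[simp] lemma adj_cc {u v : Fin d × Fin (d+1)} :
    (bipartitePlusCliques d).Adj (.inr u) (.inr v) ↔ u.1 = v.1 ∧ u ≠ v := by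
  simp [bipartitePlusCliques, cliqueCopies]

end AdjLemmas

lemma sum_ite_ne {α : Type*} [Fintype α] [DecidableEq α] (k : α) :
    ∑ j : α, (if k = j then (0:ℝ) else 1) = (Fintype.card α : ℝ) - 1 := by
  have : ∀ j : α, (if k = j then (0:ℝ) else 1) = 1 - (if k = j then 1 else 0) := by
    intro j; split <;> ring
  simp only [this, Finset.sum_sub_distrib, Finset.sum_const, Finset.sum_ite_eq]
  simp [Finset.card_univ]

/-- The graph is `d`-regular: the all-ones vector is an eigenvector with eigenvalue `d`. -/
lemma reg (d : ℕ) :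
    (bipartitePlusCliques d).adjMatrix ℝ *ᵥ (fun _ => (1:ℝ))
      = (d:ℝ) • (fun (_ : Vtx d) => (1:ℝ)) := by
  funext x
  rw [Matrix.mulVec, dotProduct]
  rcases x with (a | b) | ⟨c, k⟩ <;>
    simp only [Fintype.sum_sum_type, Fintype.sum_prod_type, SimpleGraph.adjMatrix_apply,
      adj_ll, adj_lr, adj_rl, adj_rr, adj_bc, adj_cb, adj_cc, if_true, if_false,
      iff_true, iff_false, mul_one, Pi.smul_apply, smul_eq_mul]
  · simp
  · simp
  · have hcard : (filter (fun x => ¬k = x) univ : Finset (Fin (d+1))) = univ.erase k := by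
      ext x; simp [Finset.mem_erase, eq_comm, and_comm]
    simp only [Prod.ext_iff, ne_eq, not_and, ite_and, Finset.sum_ite_eq]
    simp [sum_ite_ne, ite_not, hcard, Finset.card_erase_of_mem]

/-- The signed indicator of the two sides of the bipartite component. -/
noncomputable def v2 (d : ℕ) : Vtx d → ℝ :=
  Sum.elim (Sum.elim (fun _ => 1) (fun _ => -1)) (fun _ => 0)

/-- The signed indicator vector is an eigenvector with eigenvalue `-d`. -/
lemma bip (d : ℕ) :
    (bipartitePlusCliques d).adjMatrix ℝ *ᵥ v2 d = (-(d:ℝ)) • v2 d := by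
  funext x
  rw [Matrix.mulVec, dotProduct]
  rcases x with (a | b) | ⟨c, k⟩ <;>
    simp only [Fintype.sum_sum_type, Fintype.sum_prod_type, SimpleGraph.adjMatrix_apply,
      adj_ll, adj_lr, adj_rl, adj_rr, adj_bc, adj_cb, adj_cc, if_true, if_false,
      iff_true, iff_false, v2, Sum.elim_inl, Sum.elim_inr, Pi.smul_apply, smul_eq_mul,
      mul_one, mul_zero, mul_neg, zero_mul] <;>
  simp

/-- Let `G` be the disjoint union of `K_{d,d}` with `d` copies of `K_{d+1}`, a graph on
`n = 2d + d(d+1)` vertices. Then `α(G) = 2d`, the adjacency matrix of `G` has maximum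
eigenvalue `d` and minimum eigenvalue `-d`, and consequently the ratio bound is
`|(-d)/(d - (-d))| * n = n / 2`. -/
theorem ratio_bound_weak_example (d : ℕ) (hd : 1 ≤ d) :
    Fintype.card ((Fin d ⊕ Fin d) ⊕ (Fin d × Fin (d + 1))) = 2 * d + d * (d + 1) ∧
    ((∃ s : Finset ((Fin d ⊕ Fin d) ⊕ (Fin d × Fin (d + 1))),
        (∀ i ∈ s, ∀ j ∈ s, ¬ (bipartitePlusCliques d).Adj i j) ∧ s.card = 2 * d) ∧
      (∀ s : Finset ((Fin d ⊕ Fin d) ⊕ (Fin d × Fin (d + 1))),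
        (∀ i ∈ s, ∀ j ∈ s, ¬ (bipartitePlusCliques d).Adj i j) → s.card ≤ 2 * d)) ∧
    (∀ i, (adjMatrix_isHermitian' (bipartitePlusCliques d)).eigenvalues i ≤ (d : ℝ)) ∧
    (∃ i, (adjMatrix_isHermitian' (bipartitePlusCliques d)).eigenvalues i = (d : ℝ)) ∧
    (∀ i, -(d : ℝ) ≤ (adjMatrix_isHermitian' (bipartitePlusCliques d)).eigenvalues i) ∧
    (∃ i, (adjMatrix_isHermitian' (bipartitePlusCliques d)).eigenvalues i = -(d : ℝ)) ∧
    |(-(d : ℝ)) / ((d : ℝ) - (-(d : ℝ)))| * ((2 * d + d * (d + 1) : ℕ) : ℝ) =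
      ((2 * d + d * (d + 1) : ℕ) : ℝ) / 2 := by
  have hA := adjMatrix_isHermitian' (bipartitePlusCliques d)
  set A := (bipartitePlusCliques d).adjMatrix ℝ with hAdef
  have hpos : ∀ i j, 0 ≤ A i j := by
    intro i j; rw [hAdef, SimpleGraph.adjMatrix_apply]; split <;> norm_num
  have hrow : ∀ i, ∑ j, A i j = (d : ℝ) := by
    intro i
    calc ∑ j, A i j = (A *ᵥ fun _ => (1:ℝ)) i := by
          simp only [Matrix.mulVec, dotProduct, mul_one]
    _ = (d : ℝ) := by rw [hAdef, reg d]; simp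
  have a0 : Fin d := ⟨0, hd⟩
  refine ⟨?_, ⟨?_, ?_⟩, ?_, ?_, ?_, ?_, ?_⟩
  · simp; ring
  · -- independent set of size 2d
    refine ⟨(univ.image fun a : Fin d => (Sum.inl (Sum.inl a) : Vtx d)) ∪
      (univ.image fun c : Fin d => (Sum.inr (c, 0) : Vtx d)), ?_, ?_⟩
    · intro i hi j hj
      simp only [Finset.mem_union, Finset.mem_image, Finset.mem_univ, true_and] at hi hj
      rcases hi with ⟨a, rfl⟩ | ⟨c, rfl⟩ <;> rcases hj with ⟨a', rfl⟩ | ⟨c', rfl⟩ <;> simp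
    · rw [Finset.card_union_of_disjoint, Finset.card_image_of_injective,
        Finset.card_image_of_injective]
      · simp; ring
      · intro x y hxy; simpa using hxy
      · intro x y hxy; simpa using hxy
      · simp [Finset.disjoint_left]
  · -- independence number upper bound
    intro s hs
    have hinj : Set.InjOn
        (Sum.elim (Sum.elim Sum.inl Sum.inl) (fun u => Sum.inr u.1) : Vtx d → Fin d ⊕ Fin d)
        ↑s := by
      intro x hx y hy hxy
      rcases x with (a | b) | ⟨c, k⟩ <;> rcases y with (a' | b') | ⟨c', k'⟩ <;>
        simp at hxy
      · rw [hxy]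
      · exact absurd (adj_lr.mpr trivial)
          (hs _ (Finset.mem_coe.mp hx) _ (Finset.mem_coe.mp hy))
      · exact absurd (adj_rl.mpr trivial)
          (hs _ (Finset.mem_coe.mp hx) _ (Finset.mem_coe.mp hy))
      · rw [hxy]
      · by_contra hne
        exact (hs _ (Finset.mem_coe.mp hx) _ (Finset.mem_coe.mp hy))
          (adj_cc.mpr ⟨hxy, fun h => hne (congrArg Sum.inr h)⟩)
    calc s.card ≤ (univ : Finset (Fin d ⊕ Fin d)).card :=
          Finset.card_le_card_of_injOn _ (fun _ _ => Finset.mem_univ _) hinj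
    _ = 2 * d := by simp [Finset.card_univ]; ring
  · -- eigenvalues ≤ d
    intro i
    have hb : A *ᵥ ⇑(hA.eigenvectorBasis i) = hA.eigenvalues i • ⇑(hA.eigenvectorBasis i) :=
      hA.mulVec_eigenvectorBasis i
    have hne : ⇑(hA.eigenvectorBasis i) ≠ 0 := by
      intro h0
      exact hA.eigenvectorBasis.orthonormal.ne_zero i (by ext j; exact congrFun h0 j)
    have := row_bound hpos hrow hne hb
    exact (abs_le.mp this).2
  · -- d is an eigenvalue
    have h1ne : (fun _ : Vtx d => (1:ℝ)) ≠ 0 := by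
      intro h0
      have := congrFun h0 (Sum.inl (Sum.inl a0))
      norm_num at this
    exact exists_eigenvalue_eq hA h1ne (reg d)
  · -- eigenvalues ≥ -d
    intro i
    have hb : A *ᵥ ⇑(hA.eigenvectorBasis i) = hA.eigenvalues i • ⇑(hA.eigenvectorBasis i) :=
      hA.mulVec_eigenvectorBasis i
    have hne : ⇑(hA.eigenvectorBasis i) ≠ 0 := by
      intro h0
      exact hA.eigenvectorBasis.orthonormal.ne_zero i (by ext j; exact congrFun h0 j)
    have := row_bound hpos hrow hne hb
    exact (abs_le.mp this).1
  · -- -d is an eigenvalue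
    have h2ne : v2 d ≠ 0 := by
      intro h0
      have := congrFun h0 (Sum.inl (Sum.inl a0))
      norm_num [v2] at this
    exact exists_eigenvalue_eq hA h2ne (bip d)
  · -- arithmetic
    have hd0 : (d:ℝ) ≠ 0 := Nat.cast_ne_zero.mpr (by omega)
    have h1 : (-(d:ℝ)) / ((d:ℝ) - (-(d:ℝ))) = -(1/2) := by
      field_simp
      ring
    rw [h1, abs_neg, abs_of_nonneg (by norm_num : (0:ℝ) ≤ 1/2)]
    ring
end
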